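/- arXiv:1112.3060 — 8 statements merged into one kernel-verified Lean document; each statement's English description precedes it below -/
import Mathlib

section
/- Let L = (L_1 ≥ L_2 ≥ ⋯ ≥ L_K) and L' = (L'_1 ≥ L'_2 ≥ ⋯ ≥ L'_{K'}) be weakly decreasing sequences of positive integers with L ≼ L'. If L' ∈ TFF(α, N), then L ∈ TFF(α, N). -/
open Matrix

/-- `L` is a tight fusion frame (TFF) sequence for frame bound `α` in dimension `N`:
there exist orthogonal projections `P i` on `ℝ^N` with `rank (P i) = L i` whose sum
is `α` times the identity. -/
def IsTFF (N : ℕ) (α : ℝ) {K : ℕ} (L : Fin K → ℕ) : Prop :=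
  ∃ P : Fin K → Matrix (Fin N) (Fin N) ℝ,
    (∀ i, P i * P i = P i) ∧
    (∀ i, (P i)ᵀ = P i) ∧
    (∀ i, (P i).rank = L i) ∧
    (∑ i, P i) = α • (1 : Matrix (Fin N) (Fin N) ℝ)

/-- `Majorizes L L'` means `L ≼ L'`: the two sequences have equal total sums and the
partial sums of `L` are dominated by those of `L'` for all `k ≤ min K K'`. -/
def Majorizes {K K' : ℕ} (L : Fin K → ℕ) (L' : Fin K' → ℕ) : Prop :=
  (∑ i, L i = ∑ i, L' i) ∧
  ∀ k ≤ min K K',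
    ∑ i ∈ Finset.univ.filter (fun i : Fin K => (i : ℕ) < k), L i ≤
      ∑ i ∈ Finset.univ.filter (fun i : Fin K' => (i : ℕ) < k), L' i



/-- trace = rank for an idempotent real matrix. -/
lemma trace_eq_rank_of_idem {N : ℕ} (A : Matrix (Fin N) (Fin N) ℝ)
    (h : A * A = A) : A.trace = (A.rank : ℝ) := by
  have hf : A.mulVecLin ∘ₗ A.mulVecLin = A.mulVecLin := by
    rw [← Matrix.mulVecLin_mul, h]
  have hproj : LinearMap.IsProj (LinearMap.range A.mulVecLin) A.mulVecLin := by
    constructor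
    · intro x; exact LinearMap.mem_range_self _ x
    · rintro x ⟨y, rfl⟩
      have := congrArg (fun f => f y) hf
      simpa using this
  have htr := hproj.trace
  have h1 : LinearMap.trace ℝ (Fin N → ℝ) A.mulVecLin = A.trace := by
    rw [LinearMap.trace_eq_matrix_trace ℝ (Pi.basisFun ℝ (Fin N)),
      LinearMap.toMatrix_eq_toMatrix', ← Matrix.toLin'_apply', LinearMap.toMatrix'_toLin']
  rw [Matrix.rank, ← htr, h1]


lemma mul_vecMulVec' {N : ℕ} (A : Matrix (Fin N) (Fin N) ℝ) (x y : Fin N → ℝ) :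
    A * vecMulVec x y = vecMulVec (A *ᵥ x) y := by
  ext i j
  simp only [Matrix.mul_apply, vecMulVec_apply, Matrix.mulVec, dotProduct, Finset.sum_mul]
  exact Finset.sum_congr rfl fun k _ => by ring

lemma vecMulVec_mul' {N : ℕ} (x y : Fin N → ℝ) (A : Matrix (Fin N) (Fin N) ℝ) :
    vecMulVec x y * A = vecMulVec x (y ᵥ* A) := by
  ext i j
  simp only [Matrix.mul_apply, vecMulVec_apply, Matrix.vecMul, dotProduct, Finset.mul_sum]
  exact Finset.sum_congr rfl fun k _ => by ring

/-- Transfer one unit of rank from a larger projection to a smaller one. -/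
lemma proj_transfer {N : ℕ} (P Q : Matrix (Fin N) (Fin N) ℝ)
    (hP : P * P = P) (hPt : Pᵀ = P) (hQ : Q * Q = Q) (hQt : Qᵀ = Q)
    (hlt : Q.rank < P.rank) :
    ∃ P' Q' : Matrix (Fin N) (Fin N) ℝ,
      P' * P' = P' ∧ P'ᵀ = P' ∧ Q' * Q' = Q' ∧ Q'ᵀ = Q' ∧
      P'.rank = P.rank - 1 ∧ Q'.rank = Q.rank + 1 ∧ P' + Q' = P + Q := by
  classical
  set U := LinearMap.range P.mulVecLin with hUdef
  set W := LinearMap.ker Q.mulVecLin with hWdef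
  have hNfin : Module.finrank ℝ (Fin N → ℝ) = N := by simp
  have hWrank : Q.rank + Module.finrank ℝ W = N := by
    have := LinearMap.finrank_range_add_finrank_ker Q.mulVecLin
    rw [hNfin] at this
    exact this
  have hsup : Module.finrank ℝ ↥(U ⊔ W) ≤ N := by
    have := Submodule.finrank_le (U ⊔ W)
    rwa [hNfin] at this
  have hinf : 0 < Module.finrank ℝ ↥(U ⊓ W) := by
    have h1 := Submodule.finrank_sup_add_finrank_inf_eq U W
    have hU : Module.finrank ℝ U = P.rank := rfl
    omega
  have hne : U ⊓ W ≠ ⊥ := by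
    intro hb
    rw [hb, finrank_bot] at hinf
    omega
  obtain ⟨v, hv, hv0⟩ := (Submodule.ne_bot_iff _).mp hne
  have hvU : P *ᵥ v = v := by
    obtain ⟨w, hw⟩ := hv.1
    have : P *ᵥ (P *ᵥ w) = (P * P) *ᵥ w := (mulVec_mulVec w P P)
    rw [hP] at this
    simp only [Matrix.mulVecLin_apply] at hw
    rwa [hw] at this
  have hvW : Q *ᵥ v = 0 := by
    have := hv.2
    simpa [hWdef, Matrix.mulVecLin_apply] using this
  set c : ℝ := v ⬝ᵥ v with hcdef
  have hc : c ≠ 0 := fun h => hv0 (dotProduct_self_eq_zero.mp h)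
  set E : Matrix (Fin N) (Fin N) ℝ := c⁻¹ • vecMulVec v v with hEdef
  have hvv : vecMulVec v v * vecMulVec v v = c • vecMulVec v v := by
    ext i j
    simp only [Matrix.mul_apply, vecMulVec_apply, Matrix.smul_apply, smul_eq_mul, hcdef,
      dotProduct]
    rw [Finset.sum_mul]
    exact Finset.sum_congr rfl fun k _ => by ring
  have hEsq : E * E = E := by
    rw [hEdef, Matrix.smul_mul, Matrix.mul_smul, hvv, smul_smul, smul_smul]
    congr 1
    field_simp
  have hPE : P * E = E := by
    rw [hEdef, Matrix.mul_smul, mul_vecMulVec', hvU]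
  have hEP : E * P = E := by
    rw [hEdef, Matrix.smul_mul, vecMulVec_mul']
    rw [← hPt, vecMul_transpose, hvU]
  have hQE : Q * E = 0 := by
    rw [hEdef, Matrix.mul_smul, mul_vecMulVec', hvW]
    ext i j
    simp [vecMulVec_apply]
  have hEQ : E * Q = 0 := by
    rw [hEdef, Matrix.smul_mul, vecMulVec_mul']
    rw [← hQt, vecMul_transpose, hvW]
    ext i j
    simp [vecMulVec_apply]
  have hEt : Eᵀ = E := by
    rw [hEdef, Matrix.transpose_smul]
    congr 1
    ext i j
    simp [vecMulVec_apply, mul_comm]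
  have htrE : E.trace = 1 := by
    rw [hEdef, Matrix.trace_smul, smul_eq_mul]
    have : (vecMulVec v v).trace = c := by
      simp [Matrix.trace, Matrix.diag, vecMulVec_apply, hcdef, dotProduct]
    rw [this]
    field_simp
  -- the new projections
  refine ⟨P - E, Q + E, ?_, ?_, ?_, ?_, ?_, ?_, ?_⟩
  · rw [sub_mul, mul_sub, mul_sub, hP, hPE, hEP, hEsq]
    abel
  · rw [Matrix.transpose_sub, hPt, hEt]
  · rw [add_mul, mul_add, mul_add, hQ, hQE, hEQ, hEsq]
    abel
  · rw [Matrix.transpose_add, hQt, hEt]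
  · -- rank (P - E) = P.rank - 1
    have hidem : (P - E) * (P - E) = P - E := by
      rw [sub_mul, mul_sub, mul_sub, hP, hPE, hEP, hEsq]; abel
    have ht1 := trace_eq_rank_of_idem _ hidem
    have ht2 := trace_eq_rank_of_idem _ hP
    have htr : (P - E).trace = (P.rank : ℝ) - 1 := by
      rw [Matrix.trace_sub, htrE, ht2]
    have h1 : (1 : ℕ) ≤ P.rank := by omega
    have : ((P - E).rank : ℝ) = ((P.rank - 1 : ℕ) : ℝ) := by
      rw [← ht1, htr, Nat.cast_sub h1, Nat.cast_one]
    exact_mod_cast this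
  · have hidem : (Q + E) * (Q + E) = Q + E := by
      rw [add_mul, mul_add, mul_add, hQ, hQE, hEQ, hEsq]; abel
    have ht1 := trace_eq_rank_of_idem _ hidem
    have ht2 := trace_eq_rank_of_idem _ hQ
    have htr : (Q + E).trace = (Q.rank : ℝ) + 1 := by
      rw [Matrix.trace_add, htrE, ht2]
    have : ((Q + E).rank : ℝ) = ((Q.rank + 1 : ℕ) : ℝ) := by
      rw [← ht1, htr, Nat.cast_add, Nat.cast_one]
    exact_mod_cast this
  · abel


section Helpers

variable {ι : Type*} [DecidableEq ι] {β : Type*} [AddCommMonoid β]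

lemma sum_erase2 {s : Finset ι} {i j : ι} (hi : i ∈ s) (hj : j ∈ s) (hij : i ≠ j) (f : ι → β) :
    ∑ k ∈ s, f k = f i + (f j + ∑ k ∈ (s.erase i).erase j, f k) := by
  rw [← Finset.add_sum_erase s f hi,
    ← Finset.add_sum_erase (s.erase i) f (Finset.mem_erase.mpr ⟨hij.symm, hj⟩)]

lemma sum_pad {K K' : ℕ} (hKK : K' ≤ K) (f : Fin K' → β) :
    (∑ i : Fin K, if h : (i : ℕ) < K' then f ⟨i, h⟩ else 0) = ∑ i, f i := by
  have h2 : ∑ i : Fin K', f i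
      = ∑ n ∈ Finset.range K', (fun n => if h : n < K' then f ⟨n, h⟩ else 0) n := by
    rw [← Fin.sum_univ_eq_sum_range]
    exact Finset.sum_congr rfl fun i _ => by simp [i.isLt]
  rw [Fin.sum_univ_eq_sum_range (fun n => if h : n < K' then f ⟨n, h⟩ else 0) K, h2]
  exact (Finset.sum_subset (Finset.range_subset_range.mpr hKK) (fun x hx hnx => by
    rw [dif_neg]; simpa using hnx)).symm

lemma sum_filter_congr {K K' k : ℕ} (hk : k ≤ K) (hk' : k ≤ K')
    (f : Fin K → β) (g : Fin K' → β)
    (hfg : ∀ n (h1 : n < K) (h2 : n < K'), n < k → f ⟨n, h1⟩ = g ⟨n, h2⟩) :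
    ∑ i ∈ Finset.univ.filter (fun i : Fin K => (i : ℕ) < k), f i =
    ∑ i ∈ Finset.univ.filter (fun i : Fin K' => (i : ℕ) < k), g i := by
  refine Finset.sum_bij'
    (fun (i : Fin K) (hi : i ∈ Finset.univ.filter (fun i : Fin K => (i : ℕ) < k)) =>
      (⟨i.1, lt_of_lt_of_le (by simpa using hi) hk'⟩ : Fin K'))
    (fun (i : Fin K') (hi : i ∈ Finset.univ.filter (fun i : Fin K' => (i : ℕ) < k)) =>
      (⟨i.1, lt_of_lt_of_le (by simpa using hi) hk⟩ : Fin K))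
    ?_ ?_ ?_ ?_ ?_
  · intro a ha; simpa using (by simpa using ha : (a : ℕ) < k)
  · intro a ha; simpa using (by simpa using ha : (a : ℕ) < k)
  · intro a ha; rfl
  · intro a ha; rfl
  · intro a ha; exact hfg a.1 a.2 _ (by simpa using ha)

/-- partial sums -/
def psum {K : ℕ} (M : Fin K → ℕ) (k : ℕ) : ℕ :=
  ∑ i ∈ Finset.univ.filter (fun i : Fin K => (i : ℕ) < k), M i

end Helpers

lemma isTFF_transfer {K N : ℕ} (α : ℝ) (M M' : Fin K → ℕ) (i j : Fin K) (hij : i ≠ j)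
    (hlt : M j < M i)
    (hMi : M' i = M i - 1) (hMj : M' j = M j + 1)
    (hother : ∀ k, k ≠ i → k ≠ j → M' k = M k)
    (h : IsTFF N α M) : IsTFF N α M' := by
  classical
  obtain ⟨P, hidem, ht, hrk, hsum⟩ := h
  have hlt' : (P j).rank < (P i).rank := by rw [hrk, hrk]; exact hlt
  obtain ⟨A, B, hA1, hA2, hB1, hB2, hArk, hBrk, hAB⟩ :=
    proj_transfer (P i) (P j) (hidem i) (ht i) (hidem j) (ht j) hlt'
  have hif1 : (if i = i then A else if i = j then B else P i) = A := by simp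
  have hif2 : (if j = i then A else if j = j then B else P j) = B := by simp [Ne.symm hij]
  refine ⟨fun k => if k = i then A else if k = j then B else P k, ?_, ?_, ?_, ?_⟩
  · intro k
    beta_reduce
    by_cases h1 : k = i
    · subst h1; rw [hif1]; exact hA1
    · by_cases h2 : k = j
      · subst h2; rw [hif2]; exact hB1
      · rw [if_neg h1, if_neg h2]; exact hidem k
  · intro k
    beta_reduce
    by_cases h1 : k = i
    · subst h1; rw [hif1]; exact hA2
    · by_cases h2 : k = j
      · subst h2; rw [hif2]; exact hB2
      · rw [if_neg h1, if_neg h2]; exact ht k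
  · intro k
    beta_reduce
    by_cases h1 : k = i
    · subst h1; rw [hif1, hArk, hrk, hMi]
    · by_cases h2 : k = j
      · subst h2; rw [hif2, hBrk, hrk, hMj]
      · rw [if_neg h1, if_neg h2, hrk k, hother k h1 h2]
  · rw [sum_erase2 (Finset.mem_univ i) (Finset.mem_univ j) hij] at hsum ⊢
    have hcong : ∑ k ∈ (Finset.univ.erase i).erase j,
        (if k = i then A else if k = j then B else P k) =
        ∑ k ∈ (Finset.univ.erase i).erase j, P k := by
      refine Finset.sum_congr rfl fun k hk => ?_
      have hk1 : k ≠ j := (Finset.mem_erase.mp hk).1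
      have hk2 : k ≠ i := (Finset.mem_erase.mp (Finset.mem_erase.mp hk).2).1
      simp [hk1, hk2]
    rw [hcong, hif1, hif2, ← hsum, ← add_assoc, ← add_assoc, hAB]

lemma key {K N : ℕ} (α : ℝ) (L : Fin K → ℕ) (hL : Antitone L) :
    ∀ n (M : Fin K → ℕ), (∑ i, (M i - L i)) = n → (∑ i, M i = ∑ i, L i) →
      (∀ k, psum L k ≤ psum M k) → IsTFF N α M → IsTFF N α L := by
  intro n
  induction n using Nat.strong_induction_on with
  | _ n IH =>
  intro M hn hsum hinv hTFF
  by_cases h0 : ∀ i, M i ≤ L i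
  · have hge : ∀ i, L i ≤ M i := by
      intro i
      by_contra hi
      push_neg at hi
      have : ∑ k, M k < ∑ k, L k :=
        Finset.sum_lt_sum (fun k _ => h0 k) ⟨i, Finset.mem_univ i, hi⟩
      omega
    have : M = L := funext fun i => le_antisymm (h0 i) (hge i)
    rwa [this] at hTFF
  · push_neg at h0
    obtain ⟨iw, hiw⟩ := h0
    classical
    set A : Finset (Fin K) := Finset.univ.filter (fun i => L i < M i) with hAdef
    have hAne : A.Nonempty := ⟨iw, by simp [hAdef, hiw]⟩
    set i0 := A.min' hAne with hi0def
    have hi0 : L i0 < M i0 := by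
      have := A.min'_mem hAne
      simpa [hAdef] using this
    have hi0min : ∀ m : Fin K, (m : ℕ) < (i0 : ℕ) → M m ≤ L m := by
      intro m hm
      by_contra hc
      push_neg at hc
      have : i0 ≤ m := A.min'_le m (by simp [hAdef, hc])
      rw [Fin.le_def] at this
      omega
    have hBex : ∃ j, M j < L j := by
      by_contra hc
      push_neg at hc
      have : ∑ k, L k < ∑ k, M k :=
        Finset.sum_lt_sum (fun k _ => hc k) ⟨i0, Finset.mem_univ i0, hi0⟩
      omega
    obtain ⟨jw, hjw⟩ := hBex
    set B : Finset (Fin K) := Finset.univ.filter (fun i => M i < L i) with hBdef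
    have hBne : B.Nonempty := ⟨jw, by simp [hBdef, hjw]⟩
    set j0 := B.min' hBne with hj0def
    have hj0 : M j0 < L j0 := by
      have := B.min'_mem hBne
      simpa [hBdef] using this
    have hj0min : ∀ m : Fin K, (m : ℕ) < (j0 : ℕ) → L m ≤ M m := by
      intro m hm
      by_contra hc
      push_neg at hc
      have : j0 ≤ m := B.min'_le m (by simp [hBdef, hc])
      rw [Fin.le_def] at this
      omega
    -- i0 < j0
    have hij : (i0 : ℕ) < (j0 : ℕ) := by
      rcases lt_trichotomy ((i0 : ℕ)) ((j0 : ℕ)) with h | h | h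
      · exact h
      · exfalso; have : i0 = j0 := Fin.ext h; rw [this] at hi0; omega
      · exfalso
        have hstrict : psum M ((j0 : ℕ) + 1) < psum L ((j0 : ℕ) + 1) := by
          apply Finset.sum_lt_sum
          · intro m hm
            rw [Finset.mem_filter] at hm
            rcases eq_or_ne m j0 with rfl | hne
            · exact le_of_lt hj0
            · have hmlt : (m : ℕ) < (j0 : ℕ) := by
                have := hm.2
                have : (m : ℕ) ≠ (j0 : ℕ) := fun hc => hne (Fin.ext hc)
                omega
              exact hi0min m (by omega)
          · exact ⟨j0, by simp, hj0⟩
        have := hinv ((j0 : ℕ) + 1)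
        omega
    have hi0j0 : i0 ≠ j0 := fun hc => by rw [hc] at hij; omega
    have hLL : L j0 ≤ L i0 := hL (by rw [Fin.le_def]; omega)
    have hMM : M j0 + 2 ≤ M i0 := by omega
    -- the transfer
    set M' : Fin K → ℕ := fun k => if k = i0 then M i0 - 1 else if k = j0 then M j0 + 1 else M k
      with hM'def
    have hM'i0 : M' i0 = M i0 - 1 := by simp [hM'def]
    have hM'j0 : M' j0 = M j0 + 1 := by simp [hM'def, Ne.symm hi0j0]
    have hM'other : ∀ k, k ≠ i0 → k ≠ j0 → M' k = M k := by
      intro k h1 h2; simp [hM'def, h1, h2]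
    have hTFF' : IsTFF N α M' :=
      isTFF_transfer α M M' i0 j0 hi0j0 (by omega) hM'i0 hM'j0 hM'other hTFF
    -- measure decreases
    have hsplit := sum_erase2 (Finset.mem_univ i0) (Finset.mem_univ j0) hi0j0
      (fun i => M i - L i)
    have hsplit' := sum_erase2 (Finset.mem_univ i0) (Finset.mem_univ j0) hi0j0
      (fun i => M' i - L i)
    have hsplitM := sum_erase2 (Finset.mem_univ i0) (Finset.mem_univ j0) hi0j0 M
    have hsplitM' := sum_erase2 (Finset.mem_univ i0) (Finset.mem_univ j0) hi0j0 M'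
    have hrest : ∑ k ∈ (Finset.univ.erase i0).erase j0, (M' k - L k) =
        ∑ k ∈ (Finset.univ.erase i0).erase j0, (M k - L k) := by
      refine Finset.sum_congr rfl fun k hk => ?_
      have hk1 : k ≠ j0 := (Finset.mem_erase.mp hk).1
      have hk2 : k ≠ i0 := (Finset.mem_erase.mp (Finset.mem_erase.mp hk).2).1
      rw [hM'other k hk2 hk1]
    have hrestM : ∑ k ∈ (Finset.univ.erase i0).erase j0, M' k =
        ∑ k ∈ (Finset.univ.erase i0).erase j0, M k := by
      refine Finset.sum_congr rfl fun k hk => ?_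
      have hk1 : k ≠ j0 := (Finset.mem_erase.mp hk).1
      have hk2 : k ≠ i0 := (Finset.mem_erase.mp (Finset.mem_erase.mp hk).2).1
      rw [hM'other k hk2 hk1]
    have hn1 : 1 ≤ n := by
      have hle : M i0 - L i0 ≤ ∑ i, (M i - L i) :=
        Finset.single_le_sum (f := fun i => M i - L i) (fun i _ => Nat.zero_le _) (Finset.mem_univ i0)
      omega
    have hmeas : ∑ i, (M' i - L i) = n - 1 := by
      rw [hsplit']
      rw [hsplit] at hn
      simp only [hM'i0, hM'j0] at *
      rw [hrest]
      omega
    have hsum' : ∑ i, M' i = ∑ i, L i := by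
      rw [hsplitM'] at *
      rw [hsplitM] at hsum
      simp only [hM'i0, hM'j0] at *
      rw [hrestM]
      omega
    -- invariant preserved
    have hinv' : ∀ k, psum L k ≤ psum M' k := by
      intro k
      by_cases hk1 : (i0 : ℕ) < k ∧ k ≤ (j0 : ℕ)
      · -- psum M' k = psum M k - 1 ≥ psum L k
        have hi0mem : i0 ∈ Finset.univ.filter (fun i : Fin K => (i : ℕ) < k) := by
          simp [hk1.1]
        have hstrict : psum L k < psum M k := by
          apply Finset.sum_lt_sum
          · intro m hm
            rw [Finset.mem_filter] at hm
            exact hj0min m (by omega)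
          · exact ⟨i0, hi0mem, hi0⟩
        have heq : psum M' k = psum M k - 1 := by
          unfold psum
          rw [← Finset.add_sum_erase _ M' hi0mem, ← Finset.add_sum_erase _ M hi0mem]
          have : ∑ x ∈ (Finset.univ.filter (fun i : Fin K => (i : ℕ) < k)).erase i0, M' x =
              ∑ x ∈ (Finset.univ.filter (fun i : Fin K => (i : ℕ) < k)).erase i0, M x := by
            refine Finset.sum_congr rfl fun m hm => ?_
            have hm1 : m ≠ i0 := (Finset.mem_erase.mp hm).1
            have hm2 : (m : ℕ) < k := by
              have := (Finset.mem_erase.mp hm).2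
              simpa using this
            have hm3 : m ≠ j0 := by
              intro hc
              rw [hc] at hm2
              omega
            exact hM'other m hm1 hm3
          rw [this, hM'i0]
          omega
        omega
      · have heq : psum M' k = psum M k := by
          unfold psum
          by_cases hk2 : (j0 : ℕ) < k
          · have hi0mem : i0 ∈ Finset.univ.filter (fun i : Fin K => (i : ℕ) < k) := by
              simp; omega
            have hj0mem : j0 ∈ Finset.univ.filter (fun i : Fin K => (i : ℕ) < k) := by
              simp; omega
            rw [sum_erase2 hi0mem hj0mem hi0j0 M', sum_erase2 hi0mem hj0mem hi0j0 M]
            have : ∑ x ∈ ((Finset.univ.filter (fun i : Fin K => (i : ℕ) < k)).erase i0).erase j0,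
                M' x =
                ∑ x ∈ ((Finset.univ.filter (fun i : Fin K => (i : ℕ) < k)).erase i0).erase j0,
                M x := by
              refine Finset.sum_congr rfl fun m hm => ?_
              have hm1 : m ≠ j0 := (Finset.mem_erase.mp hm).1
              have hm2 : m ≠ i0 := (Finset.mem_erase.mp (Finset.mem_erase.mp hm).2).1
              exact hM'other m hm2 hm1
            rw [this, hM'i0, hM'j0]
            omega
          · -- k ≤ i0 (since not (i0 < k ≤ j0) and not (j0 < k)); both out of filter
            have hki0 : k ≤ (i0 : ℕ) := by omega
            refine Finset.sum_congr rfl fun m hm => ?_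
            rw [Finset.mem_filter] at hm
            have hm1 : m ≠ i0 := fun hc => by rw [hc] at hm; omega
            have hm3 : m ≠ j0 := fun hc => by
              have := hm.2
              rw [hc] at this
              omega
            exact hM'other m hm1 hm3
        rw [heq]
        exact hinv k
    exact IH (n - 1) (by omega) M' hmeas hsum' hinv' hTFF'

/-- If `L ≼ L'` and `L'` is a TFF sequence for `(α, N)`, then so is `L`. -/
theorem majorization_TFF {K K' N : ℕ} (α : ℝ)
    (L : Fin K → ℕ) (L' : Fin K' → ℕ)
    (hL : Antitone L) (hLpos : ∀ i, 0 < L i)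
    (hL' : Antitone L') (hL'pos : ∀ i, 0 < L' i)
    (hmaj : Majorizes L L')
    (h : IsTFF N α L') :
    IsTFF N α L := by
  classical
  -- K' ≤ K
  have hKK : K' ≤ K := by
    by_contra hc
    push_neg at hc
    have hmin : min K K' = K := by omega
    have h1 := hmaj.2 K (by omega)
    have h2 : ∑ i ∈ Finset.univ.filter (fun i : Fin K => (i : ℕ) < K), L i = ∑ i, L i := by
      apply Finset.sum_congr _ (fun _ _ => rfl)
      ext i
      simp [i.isLt]
    have h3 : ∑ i ∈ Finset.univ.filter (fun i : Fin K' => (i : ℕ) < K), L' i < ∑ i, L' i := by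
      apply Finset.sum_lt_sum_of_subset (Finset.filter_subset _ _)
        (i := (⟨K, hc⟩ : Fin K'))
      · exact Finset.mem_univ _
      · simp
      · exact hL'pos _
      · intro j _ _
        exact Nat.zero_le _
    rw [h2] at h1
    rw [hmaj.1] at h1
    omega
  -- the padded sequence
  set M₀ : Fin K → ℕ := fun i => if h : (i : ℕ) < K' then L' ⟨i, h⟩ else 0 with hM₀def
  -- IsTFF M₀
  obtain ⟨P, hidem, htr, hrk, hsum⟩ := h
  have hTFF0 : IsTFF N α M₀ := by
    refine ⟨fun i => if h : (i : ℕ) < K' then P ⟨i, h⟩ else 0, ?_, ?_, ?_, ?_⟩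
    · intro i
      by_cases hi : (i : ℕ) < K'
      · simp only [dif_pos hi]; exact hidem _
      · simp only [dif_neg hi, mul_zero]
    · intro i
      by_cases hi : (i : ℕ) < K'
      · simp only [dif_pos hi]; exact htr _
      · simp only [dif_neg hi, transpose_zero]
    · intro i
      by_cases hi : (i : ℕ) < K'
      · simp only [dif_pos hi, hM₀def]; exact hrk _
      · simp only [dif_neg hi, hM₀def, Matrix.rank_zero]
    · rw [sum_pad hKK P]
      exact hsum
  -- total sums
  have hsum0 : ∑ i, M₀ i = ∑ i, L i := by
    rw [hM₀def]
    rw [sum_pad hKK L']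
    exact hmaj.1.symm
  -- invariant
  have hinv0 : ∀ k, psum L k ≤ psum M₀ k := by
    intro k
    by_cases hk : k ≤ K'
    · have heq : psum M₀ k =
          ∑ i ∈ Finset.univ.filter (fun i : Fin K' => (i : ℕ) < k), L' i := by
        unfold psum
        apply sum_filter_congr (le_trans hk hKK) hk
        intro n h1 h2 h3
        simp [hM₀def, h2]
      rw [heq]
      exact hmaj.2 k (by omega)
    · push_neg at hk
      have h1 : psum M₀ k = ∑ i, M₀ i := by
        unfold psum
        apply Finset.sum_subset (Finset.filter_subset _ _)
        intro i _ hni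
        simp only [Finset.mem_filter, Finset.mem_univ, true_and, not_lt] at hni
        rw [hM₀def]
        exact dif_neg (by omega)
      have h2 : psum L k ≤ ∑ i, L i :=
        Finset.sum_le_sum_of_subset (Finset.filter_subset _ _)
      omega
  exact key α L hL _ M₀ rfl hsum0 hinv0 hTFF0
end

section
/- If (L_1, L_2, …, L_K) ∈ TFF(α, N), then (N−L_K, N−L_{K−1}, …, N−L_1) ∈ TFF(K−α, N) (where any zero entries are discarded). -/
open Matrix

lemma matrix_rank_add_le {N : ℕ} (A B : Matrix (Fin N) (Fin N) ℝ) :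
    (A + B).rank ≤ A.rank + B.rank := by
  simp only [Matrix.rank]
  rw [Matrix.mulVecLin_add]
  calc Module.finrank ℝ (LinearMap.range (A.mulVecLin + B.mulVecLin))
      ≤ Module.finrank ℝ ((LinearMap.range A.mulVecLin ⊔ LinearMap.range B.mulVecLin : Submodule ℝ (Fin N → ℝ))) := by
        apply Submodule.finrank_mono
        rintro x ⟨y, rfl⟩
        exact Submodule.add_mem_sup (LinearMap.mem_range_self _ y)
          (LinearMap.mem_range_self _ y)
    _ ≤ _ := Submodule.finrank_add_le_finrank_add_finrank _ _

lemma rank_one_sub {N : ℕ} (P : Matrix (Fin N) (Fin N) ℝ) (hP : P * P = P) :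
    (1 - P).rank = N - P.rank := by
  have hmul : P * (1 - P) = 0 := by rw [mul_sub, mul_one, hP, sub_self]
  have hle : P.rank + (1 - P).rank ≤ N := by
    simpa using Matrix.rank_add_rank_le_card_of_mul_eq_zero hmul
  have hge : N ≤ P.rank + (1 - P).rank := by
    have h1 : (P + (1 - P)).rank = N := by
      rw [add_sub_cancel]
      simp [Matrix.rank_one]
    calc N = (P + (1 - P)).rank := h1.symm
      _ ≤ P.rank + (1 - P).rank := matrix_rank_add_le _ _
  omega

/-- Spatial duality: if `(L_1, …, L_K) ∈ TFF(α, N)` then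
`(N - L_K, …, N - L_1) ∈ TFF(K - α, N)` (any zero entries being discarded). -/
theorem spatial_duality {K N : ℕ} (α : ℝ) (L : Fin K → ℕ)
    (hL : Antitone L) (hpos : ∀ i, 0 < L i)
    (h : IsTFF N α L) :
    IsTFF N ((K : ℝ) - α) (fun i : Fin K => N - L (Fin.rev i)) := by
  obtain ⟨P, hidem, hsymm, hrank, hsum⟩ := h
  refine ⟨fun i => 1 - P (Fin.rev i), ?_, ?_, ?_, ?_⟩
  · intro i
    have := hidem (Fin.rev i)
    rw [sub_mul, one_mul, mul_sub, mul_one, this]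
    abel
  · intro i
    rw [transpose_sub, transpose_one, hsymm]
  · intro i
    rw [rank_one_sub _ (hidem (Fin.rev i)), hrank]
  · rw [Finset.sum_sub_distrib]
    rw [Finset.sum_const, Finset.card_univ, Fintype.card_fin]
    rw [show (∑ i, P (Fin.rev i)) = ∑ i, P i from Fintype.sum_equiv Fin.revPerm _ _ (fun i => rfl)]
    rw [hsum, sub_smul, ← Nat.cast_smul_eq_nsmul ℝ]
end

section
/- Suppose (L_1, L_2, …, L_K) ∈ TFF(α, N) with α > 1. Then the same sequence satisfies (L_1, L_2, …, L_K) ∈ TFF(α̃, Ñ), where Ñ = (Σ_{i=1}^K L_i) − N and α̃ = α/(α−1) = αN/Ñ. -/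
open Matrix

lemma sum_ite_subtype {n : Type*} [Fintype n] (p : n → Prop)
    [DecidablePred p] (f : n → ℝ) :
    ∑ k, (if p k then f k else 0) = ∑ k : {k // p k}, f k := by
  rw [← Finset.sum_filter]
  exact Finset.sum_subtype _ (fun x => by simp) f

lemma exists_factor {n : Type*} [Fintype n] [DecidableEq n] (P : Matrix n n ℝ)
    (hidem : P * P = P) (hsymm : Pᵀ = P) :
    ∃ B : Matrix (Fin P.rank) n ℝ, B * Bᵀ = 1 ∧ Bᵀ * B = P := by
  have hH : P.IsHermitian := by simpa [Matrix.IsHermitian, Matrix.conjTranspose_eq_transpose_of_trivial] using hsymm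
  set U : Matrix n n ℝ := (hH.eigenvectorUnitary : Matrix n n ℝ) with hUdef
  set μ : n → ℝ := hH.eigenvalues with hμ
  have hspec : P = U * diagonal μ * star U := by
    have := hH.spectral_theorem
    rwa [RCLike.ofReal_real_eq_id, Function.id_comp] at this
  have hUU : star U * U = 1 := Matrix.mem_unitaryGroup_iff'.mp hH.eigenvectorUnitary.2
  have hUU' : U * star U = 1 := Matrix.mem_unitaryGroup_iff.mp hH.eigenvectorUnitary.2
  have hDP : star U * P * U = diagonal μ := by
    rw [hspec]
    calc star U * (U * diagonal μ * star U) * U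
        = (star U * U) * diagonal μ * (star U * U) := by noncomm_ring
      _ = diagonal μ := by rw [hUU, one_mul, mul_one]
  have hD : diagonal μ * diagonal μ = diagonal μ := by
    rw [← hDP]
    calc (star U * P * U) * (star U * P * U)
        = star U * (P * (U * star U) * P) * U := by noncomm_ring
      _ = star U * P * U := by rw [hUU', mul_one, hidem, Matrix.mul_assoc]
  have hμ01 : ∀ k, μ k ≠ 0 → μ k = 1 := by
    intro k hk
    have h1 := congrFun (congrFun hD k) k
    simp [Matrix.diagonal_mul_diagonal] at h1
    have : μ k * (μ k - 1) = 0 := by ring_nf; nlinarith [h1]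
    rcases mul_eq_zero.mp this with h | h
    · exact absurd h hk
    · linarith
  classical
  have hcard : Fintype.card {k // μ k ≠ 0} = P.rank := (hH.rank_eq_card_non_zero_eigs).symm
  obtain ⟨e⟩ : Nonempty (Fin P.rank ≃ {k // μ k ≠ 0}) :=
    ⟨(Fintype.equivOfCardEq (by rw [hcard, Fintype.card_fin]))⟩
  refine ⟨Matrix.of fun i j => U j (e i), ?_, ?_⟩
  · ext i i'
    have h1 := congrFun (congrFun hUU ((e i : {k // μ k ≠ 0}) : n)) ((e i' : {k // μ k ≠ 0}) : n)
    have hl : (star U * U) ((e i : {k // μ k ≠ 0}) : n) ((e i' : {k // μ k ≠ 0}) : n)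
        = ∑ j, U j (e i) * U j (e i') := by
      simp [Matrix.mul_apply, Matrix.star_apply, mul_comm]
    rw [hl] at h1
    have h2 : ((Matrix.of fun i j => U j (e i)) * (Matrix.of fun i j => U j (e i))ᵀ) i i'
        = ∑ j, U j (e i) * U j (e i') := by
      simp [Matrix.mul_apply]
    rw [h2, h1]
    by_cases hii : i = i'
    · subst hii; simp
    · have : ((e i : {k // μ k ≠ 0}) : n) ≠ ((e i' : {k // μ k ≠ 0}) : n) := by
        intro hcon
        exact hii (e.injective (Subtype.coe_injective hcon))
      simp [Matrix.one_apply, this, hii]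
  · ext j l
    have hP : P j l = ∑ k, U j k * μ k * U l k := by
      rw [hspec]
      simp [Matrix.mul_apply, Matrix.diagonal, Matrix.star_apply, Finset.sum_mul]
    have hsum : ∑ k, U j k * μ k * U l k = ∑ k, (if μ k ≠ 0 then U j k * U l k else 0) := by
      apply Finset.sum_congr rfl
      intro k _
      by_cases hk : μ k = 0
      · simp [hk]
      · rw [hμ01 k hk]; simp [hk]
    have h3 : ((Matrix.of fun i j => U j (e i))ᵀ * (Matrix.of fun i j => U j (e i))) j l
        = ∑ i : Fin P.rank, U j (e i) * U l (e i) := by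
      simp [Matrix.mul_apply]
    rw [h3, hP, hsum, sum_ite_subtype (fun k => μ k ≠ 0) (fun k => U j k * U l k)]
    exact Equiv.sum_comp e (fun k : {k // μ k ≠ 0} => U j k * U l k)


lemma exists_factor' {n : Type*} [Fintype n] [DecidableEq n] (P : Matrix n n ℝ)
    (hidem : P * P = P) (hsymm : Pᵀ = P) (r : ℕ) (hr : P.rank = r) :
    ∃ B : Matrix (Fin r) n ℝ, B * Bᵀ = 1 ∧ Bᵀ * B = P := by
  subst hr; exact exists_factor P hidem hsymm

lemma trace_eq_rank {n : Type*} [Fintype n] [DecidableEq n] (P : Matrix n n ℝ)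
    (hidem : P * P = P) (hsymm : Pᵀ = P) : P.trace = (P.rank : ℝ) := by
  obtain ⟨B, hB1, hB2⟩ := exists_factor P hidem hsymm
  calc P.trace = (Bᵀ * B).trace := by rw [hB2]
    _ = (1 : Matrix (Fin P.rank) (Fin P.rank) ℝ).trace := by rw [Matrix.trace_mul_comm, hB1]
    _ = (P.rank : ℝ) := by simp

/-- Naimark duality: if `(L_1, …, L_K) ∈ TFF(α, N)` with `α > 1`, then the same sequence
belongs to `TFF(α/(α-1), Ñ)` where `Ñ = (Σᵢ Lᵢ) - N`. -/
theorem naimark_duality {K N : ℕ} (α : ℝ) (hα : 1 < α)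
    (L : Fin K → ℕ) (hL : Antitone L) (hpos : ∀ i, 0 < L i)
    (h : IsTFF N α L) :
    IsTFF ((∑ i, L i) - N) (α / (α - 1)) L := by
  classical
  obtain ⟨P, hPi, hPs, hPr, hPsum⟩ := h
  have hα0 : α ≠ 0 := by positivity
  have hα1 : α - 1 ≠ 0 := by intro hc; linarith
  -- factor each projection
  have hfac : ∀ i : Fin K, ∃ A : Matrix (Fin (L i)) (Fin N) ℝ, A * Aᵀ = 1 ∧ Aᵀ * A = P i :=
    fun i => exists_factor' (P i) (hPi i) (hPs i) (L i) (hPr i)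
  choose A hA1 hA2 using hfac
  -- the stacked synthesis matrix
  set M : Matrix ((i : Fin K) × Fin (L i)) (Fin N) ℝ :=
    Matrix.of (fun p k => A p.1 p.2 k) with hM
  have hMM : Mᵀ * M = α • (1 : Matrix (Fin N) (Fin N) ℝ) := by
    ext k l
    have h1 : (Mᵀ * M) k l = ∑ p : (i : Fin K) × Fin (L i), M p k * M p l := by
      simp [Matrix.mul_apply]
    rw [h1]
    have h2 : ∑ p : (i : Fin K) × Fin (L i), M p k * M p l
        = ∑ i : Fin K, ∑ j : Fin (L i), A i j k * A i j l := by
      rw [← Finset.univ_sigma_univ, Finset.sum_sigma]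
      rfl
    rw [h2]
    have h3 : ∀ i : Fin K, ∑ j : Fin (L i), A i j k * A i j l = P i k l := by
      intro i
      rw [← hA2 i]
      simp [Matrix.mul_apply]
    rw [Finset.sum_congr rfl (fun i _ => h3 i), ← Matrix.sum_apply, hPsum]
  -- the complementary projection
  set Q : Matrix ((i : Fin K) × Fin (L i)) ((i : Fin K) × Fin (L i)) ℝ :=
    1 - α⁻¹ • (M * Mᵀ) with hQ
  have hQs : Qᵀ = Q := by
    rw [hQ]
    simp [Matrix.transpose_sub, Matrix.transpose_smul, Matrix.transpose_mul]
  have hSS : (M * Mᵀ) * (M * Mᵀ) = α • (M * Mᵀ) := by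
    have hassoc : M * Mᵀ * (M * Mᵀ) = M * (Mᵀ * M) * Mᵀ := by
      simp only [Matrix.mul_assoc]
    rw [hassoc, hMM, Matrix.mul_smul, Matrix.smul_mul, Matrix.mul_one]
  have hQi : Q * Q = Q := by
    rw [hQ, sub_mul, mul_sub, mul_sub, mul_one, one_mul, Matrix.mul_one,
      Matrix.smul_mul, Matrix.mul_smul, hSS, smul_smul, smul_smul]
    have h12 : α⁻¹ * α⁻¹ * α = α⁻¹ := by field_simp
    rw [h12]
    abel
  -- trace computations
  have htrP : ∀ i, (P i).trace = (L i : ℝ) := by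
    intro i
    rw [trace_eq_rank (P i) (hPi i) (hPs i), hPr i]
  have hSumL : (∑ i, (L i : ℝ)) = α * N := by
    have h4 := congrArg Matrix.trace hPsum
    rw [Matrix.trace_sum] at h4
    simp only [htrP, Matrix.trace_smul, Matrix.trace_one] at h4
    simpa [smul_eq_mul] using h4
  have hNle : N ≤ ∑ i, L i := by
    have h5 : (N : ℝ) ≤ ∑ i, (L i : ℝ) := by
      rw [hSumL]; nlinarith [Nat.cast_nonneg (α := ℝ) N]
    rw [← Nat.cast_sum] at h5
    exact_mod_cast h5
  have htrMM : (M * Mᵀ).trace = α * N := by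
    rw [Matrix.trace_mul_comm, hMM, Matrix.trace_smul, Matrix.trace_one]
    simp [smul_eq_mul]
  have htrQ : Q.trace = (∑ i, (L i : ℝ)) - N := by
    rw [hQ, Matrix.trace_sub, Matrix.trace_smul, htrMM, Matrix.trace_one,
      Fintype.card_sigma]
    simp only [Fintype.card_fin, smul_eq_mul]
    rw [inv_mul_cancel_left₀ hα0]
    push_cast
    ring
  have hQrank : Q.rank = (∑ i, L i) - N := by
    have h6 : (Q.rank : ℝ) = (((∑ i, L i) - N : ℕ) : ℝ) := by
      rw [← trace_eq_rank Q hQi hQs, htrQ, Nat.cast_sub hNle, Nat.cast_sum]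
    exact_mod_cast h6
  obtain ⟨C, hC1, hC2⟩ := exists_factor' Q hQi hQs ((∑ i, L i) - N) hQrank
  -- the dual projections
  set s : ℝ := Real.sqrt (α / (α - 1)) with hs
  have hcpos : 0 < α / (α - 1) := by
    apply div_pos <;> linarith
  have hs2 : s * s = α / (α - 1) := Real.mul_self_sqrt hcpos.le
  set D : (i : Fin K) → Matrix (Fin ((∑ i, L i) - N)) (Fin (L i)) ℝ :=
    fun i => Matrix.of (fun a j => C a ⟨i, j⟩) with hD
  have hDD : ∀ i, (D i)ᵀ * D i = (1 - α⁻¹) • (1 : Matrix (Fin (L i)) (Fin (L i)) ℝ) := by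
    intro i
    ext j j'
    have h7 : ((D i)ᵀ * D i) j j' = (Cᵀ * C) ⟨i, j⟩ ⟨i, j'⟩ := by
      simp [Matrix.mul_apply, hD]
    rw [h7, hC2, hQ]
    have h8 : (M * Mᵀ) ⟨i, j⟩ ⟨i, j'⟩ = (A i * (A i)ᵀ) j j' := by
      simp [Matrix.mul_apply, hM]
    have h9 : (1 : Matrix ((i : Fin K) × Fin (L i)) ((i : Fin K) × Fin (L i)) ℝ)
        ⟨i, j⟩ ⟨i, j'⟩ = (1 : Matrix (Fin (L i)) (Fin (L i)) ℝ) j j' := by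
      by_cases hjj : j = j'
      · subst hjj; simp
      · rw [Matrix.one_apply_ne (by simp [hjj]), Matrix.one_apply_ne hjj]
    rw [Matrix.sub_apply, Matrix.smul_apply, h8, hA1 i, h9]
    simp [Matrix.smul_apply, smul_eq_mul]
    ring
  set E : (i : Fin K) → Matrix (Fin ((∑ i, L i) - N)) (Fin (L i)) ℝ :=
    fun i => s • D i with hE
  have hEE : ∀ i, (E i)ᵀ * E i = 1 := by
    intro i
    rw [hE]
    simp only [Matrix.transpose_smul, Matrix.smul_mul, Matrix.mul_smul, smul_smul]
    rw [hDD i, smul_smul, hs2]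
    have h13 : α / (α - 1) * (1 - α⁻¹) = 1 := by field_simp
    rw [h13, one_smul]
  refine ⟨fun i => E i * (E i)ᵀ, ?_, ?_, ?_, ?_⟩
  · intro i
    have hassoc2 : E i * (E i)ᵀ * (E i * (E i)ᵀ) = E i * ((E i)ᵀ * E i) * (E i)ᵀ := by
      simp only [Matrix.mul_assoc]
    rw [hassoc2, hEE i, Matrix.mul_one]
  · intro i
    rw [Matrix.transpose_mul, Matrix.transpose_transpose]
  · intro i
    rw [Matrix.rank_self_mul_transpose, ← Matrix.rank_transpose_mul_self, hEE i,
      Matrix.rank_one, Fintype.card_fin]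
  · ext a b
    rw [Matrix.sum_apply]
    have h10 : ∀ i, (E i * (E i)ᵀ) a b
        = (α / (α - 1)) * ∑ j : Fin (L i), C a ⟨i, j⟩ * C b ⟨i, j⟩ := by
      intro i
      rw [hE]
      simp only [Matrix.mul_apply, Matrix.smul_apply, Matrix.transpose_apply, smul_eq_mul]
      rw [Finset.mul_sum]
      apply Finset.sum_congr rfl
      intro j _
      rw [hD]
      simp only [Matrix.of_apply]
      rw [← hs2]
      ring
    rw [Finset.sum_congr rfl (fun i _ => h10 i), ← Finset.mul_sum]
    have h11 : ∑ i : Fin K, ∑ j : Fin (L i), C a ⟨i, j⟩ * C b ⟨i, j⟩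
        = (C * Cᵀ) a b := by
      rw [Matrix.mul_apply, ← Finset.univ_sigma_univ, Finset.sum_sigma]
      simp
    rw [h11, hC1, Matrix.smul_apply, smul_eq_mul]
end

section
/- If α > 1 is a real number such that αN ∈ ℕ, then TFF(α, N) = TFF(α̃, Ñ) as sets of sequences, where α̃ is determined by 1/α + 1/α̃ = 1 (that is, α̃ = α/(α−1)) and Ñ = N(α−1). -/
open Matrix

lemma proj_decomp {n : Type*} [Fintype n] [DecidableEq n]
    (P : Matrix n n ℝ) (hP : P * P = P) (hS : Pᵀ = P) :
    ∃ U : Matrix n (Fin P.rank) ℝ, Uᵀ * U = 1 ∧ U * Uᵀ = P := by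
  classical
  have hH : P.IsHermitian := by
    unfold Matrix.IsHermitian
    rw [Matrix.conjTranspose_eq_transpose_of_trivial]; exact hS
  set Q : Matrix n n ℝ := (hH.eigenvectorUnitary : Matrix n n ℝ) with hQ
  set d : n → ℝ := hH.eigenvalues with hd
  have hspec : P = Q * diagonal d * Qᵀ := by
    have := hH.spectral_theorem
    simpa [hQ, hd, Function.comp, Matrix.star_eq_conjTranspose, Matrix.conjTranspose_eq_transpose_of_trivial] using this
  have hQ1 : Qᵀ * Q = 1 := by
    have := (Unitary.coe_star_mul_self hH.eigenvectorUnitary)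
    simpa [hQ, star] using this
  have hQ2 : Q * Qᵀ = 1 := by
    have := (Unitary.coe_mul_star_self hH.eigenvectorUnitary)
    simpa [hQ, star] using this
  -- eigenvalues are 0 or 1
  have hDD : diagonal d * diagonal d = diagonal d := by
    have h1 : Qᵀ * (P * P) * Q = Qᵀ * P * Q := by rw [hP]
    have h2 : Qᵀ * P * Q = diagonal d := by
      rw [hspec]
      calc Qᵀ * (Q * diagonal d * Qᵀ) * Q
          = (Qᵀ * Q) * diagonal d * (Qᵀ * Q) := by simp only [Matrix.mul_assoc]
        _ = diagonal d := by rw [hQ1, Matrix.one_mul, Matrix.mul_one]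
    calc diagonal d * diagonal d = (Qᵀ * P * Q) * (Qᵀ * P * Q) := by rw [h2]
      _ = Qᵀ * (P * (Q * Qᵀ) * P) * Q := by
          simp only [Matrix.mul_assoc]
      _ = Qᵀ * (P * P) * Q := by rw [hQ2, Matrix.mul_one, Matrix.mul_assoc]
      _ = diagonal d := by rw [h1, h2]
  have hd01 : ∀ i : n, d i = 0 ∨ d i = 1 := by
    intro i
    have h := congr_fun (congr_fun hDD i) i
    simp [diagonal, mul_apply, Finset.sum_ite_eq] at h
    have h2 : d i * (d i - 1) = 0 := by ring_nf; nlinarith [h]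
    rcases mul_eq_zero.mp h2 with h3 | h3
    · exact Or.inl h3
    · exact Or.inr (by linarith)
  -- rank = card of nonzero eigenvalues
  have hcard : Fintype.card {i // d i ≠ 0} = P.rank := (hH.rank_eq_card_non_zero_eigs).symm
  set e : Fin P.rank ≃ {i // d i ≠ 0} := (Fintype.equivFinOfCardEq hcard).symm with he
  refine ⟨Matrix.of fun a j => Q a (e j), ?_, ?_⟩
  · ext j k
    have : (Qᵀ * Q) (e j).1 (e k).1 = (1 : Matrix n n ℝ) (e j).1 (e k).1 := by
      rw [hQ1]
    simp only [mul_apply, transpose_apply, of_apply] at this ⊢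
    rw [this, Matrix.one_apply, Matrix.one_apply]
    congr 1
    simp only [eq_iff_iff]
    constructor
    · intro h; exact e.injective (Subtype.ext h)
    · intro h; rw [h]
  · ext a b
    have hPab : P a b = ∑ i, Q a i * d i * Q b i := by
      rw [hspec]
      simp [mul_apply, diagonal, Finset.sum_mul]
    rw [hPab]
    have hsum : ∑ i : n, Q a i * d i * Q b i
        = ∑ i : {i // d i ≠ 0}, Q a i.1 * d i.1 * Q b i.1 := by
      have h1 : ∑ i ∈ Finset.univ.filter (fun i => d i ≠ 0), Q a i * d i * Q b i
          = ∑ i : {i // d i ≠ 0}, Q a i.1 * d i.1 * Q b i.1 :=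
        Finset.sum_subtype _ (by simp) _
      rw [← h1]
      symm
      apply Finset.sum_subset (Finset.filter_subset _ _)
      intro x _ hx
      simp only [Finset.mem_filter, Finset.mem_univ, true_and] at hx
      push_neg at hx
      simp [hx]
    rw [hsum, ← Equiv.sum_comp e (fun i => Q a i.1 * d i.1 * Q b i.1)]
    simp only [mul_apply, transpose_apply, of_apply]
    apply Finset.sum_congr rfl
    intro j _
    have h1 : d (e j).1 = 1 := (hd01 _).resolve_left (e j).2
    rw [h1]; ring


lemma proj_decomp' {m : Type*} [Fintype m] [DecidableEq m] (P : Matrix m m ℝ)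
    (hP : P * P = P) (hS : Pᵀ = P) (r : ℕ) (hr : P.rank = r) :
    ∃ U : Matrix m (Fin r) ℝ, Uᵀ * U = 1 ∧ U * Uᵀ = P := by
  subst hr; exact proj_decomp P hP hS

lemma proj_trace {m : Type*} [Fintype m] [DecidableEq m] (P : Matrix m m ℝ)
    (hP : P * P = P) (hS : Pᵀ = P) : P.trace = (P.rank : ℝ) := by
  obtain ⟨U, h1, h2⟩ := proj_decomp P hP hS
  rw [← h2, Matrix.trace_mul_comm, h1, Matrix.trace_one, Fintype.card_fin, h2]


lemma tff_key (N N' : ℕ) (α α' : ℝ) (hα : 1 < α)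
    (hdual : 1 / α + 1 / α' = 1)
    (hN' : (N' : ℝ) = N * (α - 1)) (K : ℕ) (L : Fin K → ℕ)
    (h : IsTFF N α L) : IsTFF N' α' L := by
  classical
  obtain ⟨P, hPP, hPT, hPrank, hPsum⟩ := h
  have hα0 : (0:ℝ) < α := by linarith
  have hαne : α ≠ 0 := ne_of_gt hα0
  have hsq : Real.sqrt α * Real.sqrt α = α := Real.mul_self_sqrt hα0.le
  have hs : (Real.sqrt α)⁻¹ * (Real.sqrt α)⁻¹ = α⁻¹ := by rw [← mul_inv, hsq]
  have hinv' : 1 / α' = 1 - 1 / α := by linarith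
  have hinvpos : 0 < 1 / α' := by
    have h1 : 1 / α < 1 := by rw [div_lt_one hα0]; linarith
    rw [hinv']; linarith
  have hα'0 : 0 < α' := one_div_pos.mp hinvpos
  have hα'ne : α' ≠ 0 := ne_of_gt hα'0
  have hsq' : Real.sqrt α' * Real.sqrt α' = α' := Real.mul_self_sqrt hα'0.le
  have hdec : ∀ i, ∃ U : Matrix (Fin N) (Fin (L i)) ℝ, Uᵀ * U = 1 ∧ U * Uᵀ = P i :=
    fun i => proj_decomp' (P i) (hPP i) (hPT i) (L i) (hPrank i)
  choose U hU1 hU2 using hdec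
  set T : Matrix ((i : Fin K) × Fin (L i)) (Fin N) ℝ :=
    Matrix.of (fun p k => (Real.sqrt α)⁻¹ * U p.1 k p.2) with hT
  have hTT : Tᵀ * T = 1 := by
    ext a b
    have h1 : (Tᵀ * T) a b = ∑ p : (i : Fin K) × Fin (L i), T p a * T p b := by
      simp [mul_apply, transpose_apply]
    have step : ∀ i : Fin K, ∑ j, T ⟨i,j⟩ a * T ⟨i,j⟩ b = α⁻¹ * P i a b := by
      intro i
      rw [← hU2 i]
      simp only [hT, of_apply, mul_apply, transpose_apply]
      rw [Finset.mul_sum]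
      refine Finset.sum_congr rfl fun j _ => ?_
      calc ((Real.sqrt α)⁻¹ * U i a j) * ((Real.sqrt α)⁻¹ * U i b j)
          = ((Real.sqrt α)⁻¹ * (Real.sqrt α)⁻¹) * (U i a j * U i b j) := by ring
        _ = α⁻¹ * (U i a j * U i b j) := by rw [hs]
    rw [h1, ← Finset.univ_sigma_univ, Finset.sum_sigma]
    simp_rw [step]
    rw [← Finset.mul_sum]
    have h2 : ∑ i, P i a b = (∑ i, P i) a b := by simp [Matrix.sum_apply]
    rw [h2, hPsum]
    by_cases hab : a = b <;> simp [hab, Matrix.one_apply, hαne]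
  set G : Matrix ((i : Fin K) × Fin (L i)) ((i : Fin K) × Fin (L i)) ℝ := 1 - T * Tᵀ with hG
  have hA2 : (T*Tᵀ)*(T*Tᵀ) = T*Tᵀ := by
    rw [Matrix.mul_assoc, ← Matrix.mul_assoc Tᵀ T Tᵀ, hTT, Matrix.one_mul]
  have hGP : G * G = G := by
    rw [hG]
    simp only [mul_sub, sub_mul, Matrix.mul_one, Matrix.one_mul, hA2]
    abel
  have hGT : Gᵀ = G := by
    rw [hG, transpose_sub, transpose_one, transpose_mul, transpose_transpose]
  have htrP : ∀ i, (P i).trace = (L i : ℝ) := fun i => by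
    rw [proj_trace (P i) (hPP i) (hPT i), hPrank i]
  have hcardι : (Fintype.card ((i : Fin K) × Fin (L i)) : ℝ) = α * N := by
    have h1 : Matrix.trace (∑ i, P i) = ∑ i, (L i : ℝ) := by
      rw [Matrix.trace_sum]
      exact Finset.sum_congr rfl fun i _ => htrP i
    have h2 : Matrix.trace (α • (1 : Matrix (Fin N) (Fin N) ℝ)) = α * N := by
      simp [Matrix.trace_smul, Matrix.trace_one]
    rw [Fintype.card_sigma]
    push_cast
    simp only [Fintype.card_fin]
    rw [← h1, hPsum, h2]
  have htrG : G.trace = (N' : ℝ) := by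
    rw [hG, Matrix.trace_sub, Matrix.trace_one, Matrix.trace_mul_comm, hTT, Matrix.trace_one,
      Fintype.card_fin, hcardι, hN']
    push_cast
    ring
  have hrankG : G.rank = N' := by
    have h1 : (G.rank : ℝ) = (N' : ℝ) := by rw [← proj_trace G hGP hGT, htrG]
    exact_mod_cast h1
  obtain ⟨V, hV1, hV2⟩ := proj_decomp' G hGP hGT N' hrankG
  have hGdiag : ∀ (i : Fin K) (a b : Fin (L i)),
      G ⟨i,a⟩ ⟨i,b⟩ = (1/α') * (1 : Matrix (Fin (L i)) (Fin (L i)) ℝ) a b := by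
    intro i a b
    have h1 : (T * Tᵀ) (⟨i,a⟩ : (i : Fin K) × Fin (L i)) ⟨i,b⟩
        = α⁻¹ * ((U i)ᵀ * (U i)) a b := by
      simp only [mul_apply, transpose_apply, hT, of_apply]
      rw [Finset.mul_sum]
      refine Finset.sum_congr rfl fun k _ => ?_
      calc ((Real.sqrt α)⁻¹ * U i k a) * ((Real.sqrt α)⁻¹ * U i k b)
          = ((Real.sqrt α)⁻¹ * (Real.sqrt α)⁻¹) * (U i k a * U i k b) := by ring
        _ = α⁻¹ * (U i k a * U i k b) := by rw [hs]
    rw [hG, Matrix.sub_apply, h1, hU1 i]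
    by_cases hab : a = b
    · subst hab
      simp only [Matrix.one_apply_eq, mul_one]
      rw [hinv', one_div]
    · have hne : (⟨i,a⟩ : (i : Fin K) × Fin (L i)) ≠ ⟨i,b⟩ := by
        simp [hab]
      rw [Matrix.one_apply_ne hne, Matrix.one_apply_ne hab]
      ring
  set W : ∀ i : Fin K, Matrix (Fin N') (Fin (L i)) ℝ :=
    fun i => Matrix.of (fun x j => Real.sqrt α' * V ⟨i,j⟩ x) with hW
  have hW1 : ∀ i, (W i)ᵀ * W i = 1 := by
    intro i; ext a b
    have h1 : ((W i)ᵀ * W i) a b = α' * (V * Vᵀ) (⟨i,a⟩ : (i : Fin K) × Fin (L i)) ⟨i,b⟩ := by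
      simp only [mul_apply, transpose_apply, hW, of_apply]
      rw [Finset.mul_sum]
      refine Finset.sum_congr rfl fun x _ => ?_
      calc (Real.sqrt α' * V ⟨i,a⟩ x) * (Real.sqrt α' * V ⟨i,b⟩ x)
          = (Real.sqrt α' * Real.sqrt α') * (V ⟨i,a⟩ x * V ⟨i,b⟩ x) := by ring
        _ = α' * (V ⟨i,a⟩ x * V ⟨i,b⟩ x) := by rw [hsq']
    rw [h1, hV2, hGdiag i a b, ← mul_assoc, mul_one_div, div_self hα'ne, one_mul]
  refine ⟨fun i => W i * (W i)ᵀ, ?_, ?_, ?_, ?_⟩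
  · intro i
    rw [Matrix.mul_assoc, ← Matrix.mul_assoc (W i)ᵀ, hW1 i, Matrix.one_mul]
  · intro i; rw [transpose_mul, transpose_transpose]
  · intro i
    rw [Matrix.rank_self_mul_transpose]
    have h1 := Matrix.rank_transpose_mul_self (W i)
    rw [hW1 i, Matrix.rank_one, Fintype.card_fin] at h1
    exact h1.symm
  · ext x y
    have h1 : ∀ i, (W i * (W i)ᵀ) x y = ∑ j, α' * (V ⟨i,j⟩ x * V ⟨i,j⟩ y) := by
      intro i
      simp only [mul_apply, transpose_apply, hW, of_apply]
      refine Finset.sum_congr rfl fun j _ => ?_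
      calc (Real.sqrt α' * V ⟨i,j⟩ x) * (Real.sqrt α' * V ⟨i,j⟩ y)
          = (Real.sqrt α' * Real.sqrt α') * (V ⟨i,j⟩ x * V ⟨i,j⟩ y) := by ring
        _ = α' * (V ⟨i,j⟩ x * V ⟨i,j⟩ y) := by rw [hsq']
    have h2 : (∑ i, W i * (W i)ᵀ) x y = ∑ i, (W i * (W i)ᵀ) x y := by
      simp [Matrix.sum_apply]
    rw [h2]
    simp_rw [h1, ← Finset.mul_sum]
    have h3 : ∑ i : Fin K, ∑ j : Fin (L i), V ⟨i,j⟩ x * V ⟨i,j⟩ y = (Vᵀ * V) x y := by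
      rw [← Finset.sum_sigma Finset.univ (fun _ => Finset.univ)
        (fun p => V p x * V p y), Finset.univ_sigma_univ]
      simp [mul_apply, transpose_apply]
    rw [h3, hV1]
    by_cases hxy : x = y <;> simp [hxy, Matrix.one_apply]

/-- If `α > 1` and `αN ∈ ℕ`, then `TFF(α, N) = TFF(α̃, Ñ)` as sets of weakly decreasing
positive sequences, where `1/α + 1/α̃ = 1` and `Ñ = N(α - 1)`. -/
theorem TFF_duality_set_eq (N N' : ℕ) (α α' : ℝ) (hα : 1 < α)
    (hαN : ∃ m : ℕ, (m : ℝ) = α * N)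
    (hdual : 1 / α + 1 / α' = 1)
    (hN' : (N' : ℝ) = N * (α - 1)) :
    ∀ (K : ℕ) (L : Fin K → ℕ), Antitone L → (∀ i, 0 < L i) →
      (IsTFF N α L ↔ IsTFF N' α' L) := by
  intro K L _ _
  have hα0 : (0:ℝ) < α := by linarith
  have hαne : α ≠ 0 := ne_of_gt hα0
  have hene : α - 1 ≠ 0 := ne_of_gt (by linarith)
  have hα'ne : α' ≠ 0 := by
    intro h
    rw [h] at hdual
    simp at hdual
    linarith
  have hα'v : α' = α / (α - 1) := by
    field_simp at hdual ⊢
    nlinarith [hdual]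
  have hα' : 1 < α' := by
    rw [hα'v, lt_div_iff₀ (by linarith : (0:ℝ) < α - 1)]
    linarith
  have hdual' : 1 / α' + 1 / α = 1 := by linarith
  have hNrev : (N : ℝ) = N' * (α' - 1) := by
    rw [hN', hα'v]
    field_simp
    ring
  exact ⟨tff_key N N' α α' hα hdual hN' K L, tff_key N' N α' α hα' hdual' hNrev K L⟩
end

section
/- Let P and Q be orthogonal projections on an N-dimensional real inner product space V with ranks p and q respectively, and for λ ∈ ℝ let m(λ) be the multiplicity of λ as an eigenvalue of P+Q (with m(λ) = 0 if λ is not an eigenvalue). Then: (i) m(λ) > 0 implies λ ∈ [0,2]; (ii) Σ_{λ ∈ [0,2]} m(λ) = N; (iii) m(1) ≥ |p−q|; (iv) for every λ ∈ (0,2), m(λ) = m(2−λ); (v) m(0) − m(2) = N − p − q. -/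
open Module

section Aux
variable {V : Type*} [NormedAddCommGroup V] [InnerProductSpace ℝ V] [FiniteDimensional ℝ V]
variable {P : V →ₗ[ℝ] V}

lemma proj_idem (hP2 : P ∘ₗ P = P) (x : V) : P (P x) = P x := by
  have := LinearMap.congr_fun hP2 x; simpa using this

lemma proj_inner_self (hP2 : P ∘ₗ P = P) (hPsym : P.IsSymmetric) (x : V) :
    (inner ℝ (P x) x : ℝ) = ‖P x‖ ^ 2 := by
  calc (inner ℝ (P x) x : ℝ) = inner ℝ (P (P x)) x := by rw [proj_idem hP2]
    _ = inner ℝ (P x) (P x) := hPsym (P x) x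
    _ = ‖P x‖ ^ 2 := real_inner_self_eq_norm_sq _

lemma proj_norm_sq (hP2 : P ∘ₗ P = P) (hPsym : P.IsSymmetric) (x : V) :
    ‖P x‖ ^ 2 + ‖x - P x‖ ^ 2 = ‖x‖ ^ 2 := by
  have h1 : (inner ℝ (P x) x : ℝ) = ‖P x‖ ^ 2 := proj_inner_self hP2 hPsym x
  have h2 : ‖x - P x‖ ^ 2 = ‖x‖ ^ 2 - 2 * inner ℝ (P x) x + ‖P x‖ ^ 2 := by
    rw [← real_inner_self_eq_norm_sq, ← real_inner_self_eq_norm_sq, ← real_inner_self_eq_norm_sq]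
    simp only [inner_sub_sub_self]
    rw [real_inner_comm x (P x)]
    ring
  nlinarith [h1, h2]

lemma mem_range_iff (hP2 : P ∘ₗ P = P) (x : V) : x ∈ LinearMap.range P ↔ P x = x := by
  constructor
  · rintro ⟨y, rfl⟩; exact proj_idem hP2 y
  · intro h; exact ⟨x, h⟩

lemma ker_eq_orth (hP2 : P ∘ₗ P = P) (hPsym : P.IsSymmetric) :
    LinearMap.ker P = (LinearMap.range P)ᗮ := by
  ext x
  simp only [LinearMap.mem_ker, Submodule.mem_orthogonal]
  constructor
  · rintro h u ⟨y, rfl⟩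
    have := hPsym y x
    rw [h, inner_zero_right] at this
    exact this
  · intro h
    have h1 : (inner ℝ (P x) x : ℝ) = 0 := h _ ⟨x, rfl⟩
    rw [proj_inner_self hP2 hPsym] at h1
    have : ‖P x‖ = 0 := by nlinarith [norm_nonneg (P x)]
    simpa using this

end Aux

set_option linter.unusedSectionVars false

section Two
variable {V : Type*} [NormedAddCommGroup V] [InnerProductSpace ℝ V] [FiniteDimensional ℝ V]
variable {P Q : V →ₗ[ℝ] V}

lemma eig_energy (hP2 : P ∘ₗ P = P) (hPsym : P.IsSymmetric)
    (hQ2 : Q ∘ₗ Q = Q) (hQsym : Q.IsSymmetric) {μ : ℝ} {x : V}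
    (hx : x ∈ Module.End.eigenspace (P + Q) μ) :
    μ * ‖x‖ ^ 2 = ‖P x‖ ^ 2 + ‖Q x‖ ^ 2 := by
  rw [Module.End.mem_eigenspace_iff] at hx
  have h : (inner ℝ ((P + Q) x) x : ℝ) = μ * ‖x‖ ^ 2 := by
    rw [hx, real_inner_smul_left, real_inner_self_eq_norm_sq]
  rw [LinearMap.add_apply, inner_add_left, proj_inner_self hP2 hPsym,
    proj_inner_self hQ2 hQsym] at h
  linarith

lemma eig_zero (hP2 : P ∘ₗ P = P) (hPsym : P.IsSymmetric)
    (hQ2 : Q ∘ₗ Q = Q) (hQsym : Q.IsSymmetric) :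
    Module.End.eigenspace (P + Q) 0 = (LinearMap.range P ⊔ LinearMap.range Q)ᗮ := by
  rw [← Submodule.inf_orthogonal, ← ker_eq_orth hP2 hPsym, ← ker_eq_orth hQ2 hQsym]
  ext x
  simp only [Submodule.mem_inf, LinearMap.mem_ker]
  constructor
  · intro hx
    have h := eig_energy hP2 hPsym hQ2 hQsym hx
    rw [zero_mul] at h
    have hp : ‖P x‖ = 0 := by nlinarith [sq_nonneg ‖P x‖, sq_nonneg ‖Q x‖, norm_nonneg (P x), norm_nonneg (Q x)]
    have hq : ‖Q x‖ = 0 := by nlinarith [sq_nonneg ‖P x‖, sq_nonneg ‖Q x‖, norm_nonneg (P x), norm_nonneg (Q x)]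
    exact ⟨norm_eq_zero.mp hp, norm_eq_zero.mp hq⟩
  · rintro ⟨h1, h2⟩
    rw [Module.End.mem_eigenspace_iff, LinearMap.add_apply, h1, h2]
    simp

lemma eig_two (hP2 : P ∘ₗ P = P) (hPsym : P.IsSymmetric)
    (hQ2 : Q ∘ₗ Q = Q) (hQsym : Q.IsSymmetric) :
    Module.End.eigenspace (P + Q) 2 = LinearMap.range P ⊓ LinearMap.range Q := by
  ext x
  simp only [Submodule.mem_inf, mem_range_iff hP2, mem_range_iff hQ2]
  constructor
  · intro hx
    have h := eig_energy hP2 hPsym hQ2 hQsym hx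
    have hp := proj_norm_sq hP2 hPsym x
    have hq := proj_norm_sq hQ2 hQsym x
    have h1 : ‖x - P x‖ = 0 := by nlinarith [sq_nonneg ‖x - P x‖, sq_nonneg ‖x - Q x‖, norm_nonneg (x - P x), norm_nonneg (x - Q x)]
    have h2 : ‖x - Q x‖ = 0 := by nlinarith [sq_nonneg ‖x - P x‖, sq_nonneg ‖x - Q x‖, norm_nonneg (x - P x), norm_nonneg (x - Q x)]
    rw [norm_eq_zero, sub_eq_zero] at h1 h2
    exact ⟨h1.symm, h2.symm⟩
  · rintro ⟨h1, h2⟩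
    rw [Module.End.mem_eigenspace_iff, LinearMap.add_apply, h1, h2, two_smul]

lemma eig_mem_Icc (hP2 : P ∘ₗ P = P) (hPsym : P.IsSymmetric)
    (hQ2 : Q ∘ₗ Q = Q) (hQsym : Q.IsSymmetric) {μ : ℝ}
    (h : Module.End.eigenspace (P + Q) μ ≠ ⊥) : μ ∈ Set.Icc (0 : ℝ) 2 := by
  obtain ⟨x, hx, hx0⟩ := Submodule.exists_mem_ne_zero_of_ne_bot h
  have h1 := eig_energy hP2 hPsym hQ2 hQsym hx
  have hp := proj_norm_sq hP2 hPsym x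
  have hq := proj_norm_sq hQ2 hQsym x
  have hxn : ‖x‖ ≠ 0 := norm_ne_zero_iff.mpr hx0
  have hx2 : 0 < ‖x‖ ^ 2 := by positivity
  constructor
  · nlinarith [sq_nonneg ‖P x‖, sq_nonneg ‖Q x‖]
  · nlinarith [sq_nonneg ‖x - P x‖, sq_nonneg ‖x - Q x‖]

end Two

section Three
variable {V : Type*} [NormedAddCommGroup V] [InnerProductSpace ℝ V] [FiniteDimensional ℝ V]
variable {P Q : V →ₗ[ℝ] V}

lemma eig_mapsTo (hP2 : P ∘ₗ P = P) (hQ2 : Q ∘ₗ Q = Q) (μ : ℝ) :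
    ∀ x ∈ Module.End.eigenspace (P + Q) μ,
      (P - Q) x ∈ Module.End.eigenspace (P + Q) (2 - μ) := by
  intro x hx
  rw [Module.End.mem_eigenspace_iff] at hx ⊢
  rw [LinearMap.add_apply] at hx
  have hPz : P (Q x) = μ • P x - P x := by
    have := congrArg P hx
    rw [map_add, map_smul, proj_idem hP2] at this
    rw [eq_sub_iff_add_eq, ← this]; try abel
  have hQy : Q (P x) = μ • Q x - Q x := by
    have := congrArg Q hx
    rw [map_add, map_smul, proj_idem hQ2] at this
    rw [eq_sub_iff_add_eq, ← this]; try abel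
  rw [LinearMap.sub_apply, LinearMap.add_apply, map_sub, map_sub,
    proj_idem hP2, proj_idem hQ2, hPz, hQy, sub_smul, smul_sub]
  module

lemma eig_inj (hP2 : P ∘ₗ P = P) (hQ2 : Q ∘ₗ Q = Q) {μ : ℝ} (hμ : μ ∈ Set.Ioo (0:ℝ) 2)
    {x : V} (hx : x ∈ Module.End.eigenspace (P + Q) μ) (hz : (P - Q) x = 0) : x = 0 := by
  rw [Module.End.mem_eigenspace_iff, LinearMap.add_apply] at hx
  rw [LinearMap.sub_apply, sub_eq_zero] at hz
  have h2 : (2 : ℝ) • P x = μ • x := by rw [two_smul]; nth_rewrite 2 [hz]; exact hx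
  have hPx : P x = (μ / 2) • x := by
    have := congrArg (fun y => (2⁻¹ : ℝ) • y) h2
    simp only [smul_smul] at this
    norm_num at this
    rw [this]; congr 1; ring
  have hid : P (P x) = P x := proj_idem hP2 x
  rw [hPx, map_smul, hPx, smul_smul] at hid
  have : ((μ / 2) * (μ / 2) - μ / 2) • x = 0 := by rw [sub_smul, hid, sub_self]
  rcases smul_eq_zero.mp this with h | h
  · exfalso
    obtain ⟨h0, h2'⟩ := hμ
    have : μ / 2 * (μ / 2 - 1) = 0 := by ring_nf; ring_nf at h; linarith
    rcases mul_eq_zero.mp this with h' | h' <;> nlinarith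
  · exact h

lemma eig_rank_le (hP2 : P ∘ₗ P = P) (hQ2 : Q ∘ₗ Q = Q) {μ : ℝ}
    (hμ : μ ∈ Set.Ioo (0:ℝ) 2) :
    finrank ℝ (Module.End.eigenspace (P + Q) μ) ≤
      finrank ℝ (Module.End.eigenspace (P + Q) (2 - μ)) := by
  set f := (P - Q).restrict (eig_mapsTo hP2 hQ2 μ) with hf
  have hinj : Function.Injective f := by
    rw [← LinearMap.ker_eq_bot]
    rw [LinearMap.ker_eq_bot']
    rintro ⟨x, hx⟩ hfx
    have : (P - Q) x = 0 := by
      have := congrArg (Subtype.val) hfx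
      simpa [hf, LinearMap.restrict_apply] using this
    exact Subtype.ext (eig_inj hP2 hQ2 hμ hx this)
  exact LinearMap.finrank_le_finrank_of_injective hinj

end Three

/-- Eigenvalue multiplicities of a sum of two orthogonal projections on an
`N`-dimensional real inner product space. -/
theorem mult_sum_two_projections
    {V : Type*} [NormedAddCommGroup V] [InnerProductSpace ℝ V] [FiniteDimensional ℝ V]
    (N p q : ℕ) (hdim : Module.finrank ℝ V = N)
    (P Q : V →ₗ[ℝ] V)
    (hP2 : P ∘ₗ P = P) (hPsym : P.IsSymmetric)
    (hQ2 : Q ∘ₗ Q = Q) (hQsym : Q.IsSymmetric)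
    (hp : Module.finrank ℝ (LinearMap.range P) = p)
    (hq : Module.finrank ℝ (LinearMap.range Q) = q)
    (m : ℝ → ℕ)
    (hm : ∀ μ : ℝ, m μ = Module.finrank ℝ (Module.End.eigenspace (P + Q) μ)) :
    (∀ μ : ℝ, 0 < m μ → μ ∈ Set.Icc (0 : ℝ) 2) ∧
    (∑ᶠ μ ∈ Set.Icc (0 : ℝ) 2, m μ = N) ∧
    (|(p : ℤ) - (q : ℤ)| ≤ (m 1 : ℤ)) ∧
    (∀ μ ∈ Set.Ioo (0 : ℝ) 2, m μ = m (2 - μ)) ∧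
    ((m 0 : ℤ) - (m 2 : ℤ) = (N : ℤ) - p - q) := by
  have hT : (P + Q).IsSymmetric := hPsym.add hQsym
  -- part (i)
  have part1 : ∀ μ : ℝ, 0 < m μ → μ ∈ Set.Icc (0 : ℝ) 2 := by
    intro μ hμ
    refine eig_mem_Icc hP2 hPsym hQ2 hQsym (fun hb => ?_)
    rw [hm, hb, finrank_bot] at hμ
    exact lt_irrefl 0 hμ
  refine ⟨part1, ?_, ?_, ?_, ?_⟩
  -- part (ii)
  · classical
    set T := P + Q with hTdef
    have hsum : ∑ μ : Module.End.Eigenvalues T,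
        finrank ℝ (Module.End.eigenspace T (μ : ℝ)) = N := by
      have hint := hT.direct_sum_isInternal
      have e := LinearEquiv.ofBijective (DirectSum.coeLinearMap _) hint
      rw [← hdim, ← e.finrank_eq, finrank_directSum]
    set t : Finset ℝ :=
      Finset.univ.image (fun μ : Module.End.Eigenvalues T => (μ : ℝ)) with ht
    have hsupp : ∀ μ : ℝ, m μ ≠ 0 → μ ∈ t := by
      intro μ hμ
      have hb : Module.End.eigenspace T μ ≠ ⊥ := by
        intro hb; rw [hm, hb, finrank_bot] at hμ; exact hμ rfl
      have : Module.End.HasEigenvalue T μ := Module.End.hasEigenvalue_iff.mpr hb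
      simp only [ht, Finset.mem_image, Finset.mem_univ, true_and]
      exact ⟨⟨μ, this⟩, rfl⟩
    have h1 : ∑ᶠ μ ∈ Set.Icc (0 : ℝ) 2, m μ = ∑ μ ∈ t, m μ := by
      apply finsum_mem_eq_sum_of_inter_support_eq
      ext μ
      simp only [Set.mem_inter_iff, Set.mem_Icc, Function.mem_support, Finset.coe_sort_coe,
        Finset.mem_coe]
      constructor
      · rintro ⟨_, h2⟩; exact ⟨hsupp μ h2, h2⟩
      · rintro ⟨_, h2⟩
        exact ⟨Set.mem_Icc.mp (part1 μ (Nat.pos_of_ne_zero h2)), h2⟩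
    rw [h1, ht, Finset.sum_image (by intro x _ y _ h; exact Subtype.ext h)]
    rw [← hsum]
    exact Finset.sum_congr rfl (fun μ _ => hm _)
  -- part (iii)
  · have key : ∀ (A B : V →ₗ[ℝ] V), A ∘ₗ A = A → A.IsSymmetric → B ∘ₗ B = B →
        B.IsSymmetric → ∀ a b : ℕ, finrank ℝ (LinearMap.range A) = a →
        finrank ℝ (LinearMap.range B) = b →
        (a : ℤ) - b ≤ finrank ℝ (Module.End.eigenspace (A + B) 1) := by
      intro A B hA2 hAsym hB2 hBsym a b ha hb
      have hle : LinearMap.range A ⊓ LinearMap.ker B ≤ Module.End.eigenspace (A + B) 1 := by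
        rintro x ⟨hx1, hx2⟩
        rw [SetLike.mem_coe, LinearMap.mem_ker] at hx2
        rw [SetLike.mem_coe, mem_range_iff hA2] at hx1
        rw [Module.End.mem_eigenspace_iff, LinearMap.add_apply, hx1, hx2, add_zero, one_smul]
      have h1 := Submodule.finrank_sup_add_finrank_inf_eq (LinearMap.range A) (LinearMap.ker B)
      have h2 := LinearMap.finrank_range_add_finrank_ker B
      have h3 := Submodule.finrank_le (LinearMap.range A ⊔ LinearMap.ker B)
      have h4 := Submodule.finrank_mono hle
      rw [hdim] at h2 h3
      rw [ha, hb] at *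
      omega
    have k1 := key P Q hP2 hPsym hQ2 hQsym p q hp hq
    have k2 := key Q P hQ2 hQsym hP2 hPsym q p hq hp
    rw [add_comm Q P] at k2
    rw [hm 1, abs_sub_le_iff]
    omega
  -- part (iv)
  · intro μ hμ
    have hμ' : 2 - μ ∈ Set.Ioo (0:ℝ) 2 := by
      obtain ⟨h1, h2⟩ := hμ; constructor <;> linarith
    have h1 := eig_rank_le hP2 hQ2 hμ
    have h2 := eig_rank_le hP2 hQ2 hμ'
    rw [show (2 : ℝ) - (2 - μ) = μ by ring] at h2
    rw [hm, hm]
    exact le_antisymm h1 h2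
  -- part (v)
  · have h0 : m 0 = finrank ℝ ((LinearMap.range P ⊔ LinearMap.range Q)ᗮ) := by
      rw [hm, eig_zero hP2 hPsym hQ2 hQsym]
    have h2 : m 2 = finrank ℝ (LinearMap.range P ⊓ LinearMap.range Q : Submodule ℝ V) := by
      rw [hm, eig_two hP2 hPsym hQ2 hQsym]
    have h3 := Submodule.finrank_add_finrank_orthogonal (LinearMap.range P ⊔ LinearMap.range Q)
    have h4 := Submodule.finrank_sup_add_finrank_inf_eq (LinearMap.range P) (LinearMap.range Q)
    rw [hdim] at h3
    rw [hp, hq] at h4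
    omega
end

section
/- Let n be a positive integer and N an even positive integer, and set α = n + 1/2. Then the sequence L = (N, …, N, N/2, N/2, N/2), consisting of n−1 copies of N followed by three copies of N/2, belongs to TFF(α, N), and every sequence L' ∈ TFF(α, N) satisfies L' ≼ L. In particular, L is the unique maximal element of TFF(α, N) with respect to majorization. -/
open Matrix

namespace TFFAux

lemma rank_cast_eq_trace {N : ℕ} (P : Matrix (Fin N) (Fin N) ℝ) (h : P * P = P) :
    (P.rank : ℝ) = P.trace := by
  have hf : P.mulVecLin ∘ₗ P.mulVecLin = P.mulVecLin := by
    rw [← Matrix.mulVecLin_mul, h]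
  have hproj : LinearMap.IsProj (LinearMap.range P.mulVecLin) P.mulVecLin :=
    ⟨fun x => LinearMap.mem_range_self _ x, by
      rintro x ⟨y, rfl⟩
      conv_lhs => rw [← LinearMap.comp_apply, hf]⟩
  have ht := LinearMap.IsProj.trace hproj
  rw [Matrix.rank, ← ht, LinearMap.trace_eq_matrix_trace ℝ (Pi.basisFun ℝ (Fin N)),
    LinearMap.toMatrix_eq_toMatrix', ← Matrix.toLin'_apply', LinearMap.toMatrix'_toLin']

lemma rank_add_le' {N : ℕ} (A B : Matrix (Fin N) (Fin N) ℝ) :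
    (A + B).rank ≤ A.rank + B.rank := by
  have h : LinearMap.range (A + B).mulVecLin ≤
      LinearMap.range A.mulVecLin ⊔ LinearMap.range B.mulVecLin := by
    rintro x ⟨y, rfl⟩
    rw [Matrix.mulVecLin_add]
    exact Submodule.add_mem_sup (LinearMap.mem_range_self _ y) (LinearMap.mem_range_self _ y)
  calc (A + B).rank ≤ Module.finrank ℝ
        (LinearMap.range A.mulVecLin ⊔ LinearMap.range B.mulVecLin : Submodule ℝ (Fin N → ℝ)) :=
        Submodule.finrank_mono h
    _ ≤ A.rank + B.rank := Submodule.finrank_add_le_finrank_add_finrank _ _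

lemma rank_sum_le {N K : ℕ} (s : Finset (Fin K)) (P : Fin K → Matrix (Fin N) (Fin N) ℝ) :
    (∑ i ∈ s, P i).rank ≤ ∑ i ∈ s, (P i).rank := by
  classical
  induction s using Finset.cons_induction with
  | empty => simp [Matrix.rank_zero]
  | cons a s ha ih =>
    rw [Finset.sum_cons, Finset.sum_cons]
    exact le_trans (rank_add_le' _ _) (by omega)

lemma posDef_smul_one {N : ℕ} {c : ℝ} (hc : 0 < c) :
    Matrix.PosDef (c • 1 : Matrix (Fin N) (Fin N) ℝ) := by
  constructor
  · ext i j
    simp [Matrix.conjTranspose, Matrix.one_apply, Matrix.transpose_apply]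
  · exact (Matrix.PosDef.one.smul hc).2

lemma posSemidef_of_proj {N : ℕ} (P : Matrix (Fin N) (Fin N) ℝ) (h : P * P = P) (hs : Pᵀ = P) :
    P.PosSemidef := by
  have := Matrix.posSemidef_conjTranspose_mul_self P
  rwa [Matrix.conjTranspose_eq_transpose_of_trivial, hs, h] at this

lemma posSemidef_sum {N K : ℕ} (s : Finset (Fin K)) (M : Fin K → Matrix (Fin N) (Fin N) ℝ)
    (h : ∀ i ∈ s, (M i).PosSemidef) : (∑ i ∈ s, M i).PosSemidef := by
  classical
  induction s using Finset.cons_induction with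
  | empty => simpa using Matrix.PosSemidef.zero
  | cons a s ha ih =>
    rw [Finset.sum_cons]
    exact (h a (Finset.mem_cons_self a s)).add (ih fun i hi => h i (Finset.mem_cons_of_mem hi))

lemma card_le_sum_rank {N K : ℕ} (M : Fin K → Matrix (Fin N) (Fin N) ℝ) (s : Finset (Fin K))
    {c : ℝ} (hc : 0 < c) (S : Matrix (Fin N) (Fin N) ℝ) (hS : S.PosSemidef)
    (hsum : ∑ i ∈ s, M i = c • 1 + S) :
    N ≤ ∑ i ∈ s, (M i).rank := by
  have hpd : (∑ i ∈ s, M i).PosDef := by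
    rw [hsum]
    exact (posDef_smul_one hc).add_posSemidef hS
  have hrk : (∑ i ∈ s, M i).rank = N := by
    rw [Matrix.rank_of_isUnit _ hpd.isUnit, Fintype.card_fin]
  calc N = (∑ i ∈ s, M i).rank := hrk.symm
    _ ≤ ∑ i ∈ s, (M i).rank := rank_sum_le s M

lemma sum_filter_lt {K : ℕ} {M : Type*} [AddCommMonoid M] (f : Fin K → M) (k : ℕ) (hk : k ≤ K) :
    ∑ i ∈ Finset.univ.filter (fun i : Fin K => (i : ℕ) < k), f i
      = ∑ j : Fin k, f (Fin.castLE hk j) := by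
  refine Finset.sum_bij' (i := fun i hi => (⟨(i : ℕ), by simpa using hi⟩ : Fin k))
    (j := fun j _ => Fin.castLE hk j) ?_ ?_ ?_ ?_ ?_ <;>
    simp [Fin.ext_iff]

lemma card_filter_lt {K : ℕ} (k : ℕ) (hk : k ≤ K) :
    (Finset.univ.filter (fun i : Fin K => (i : ℕ) < k)).card = k := by
  rw [Finset.card_eq_sum_ones, sum_filter_lt (fun _ => 1) k hk]
  simp

lemma sum_ite_lt (a b : ℕ) (t k : ℕ) (ht : t ≤ k) :
    ∑ j ∈ Finset.range k, (if j < t then a else b) = t * a + (k - t) * b := by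
  induction k with
  | zero => simp at ht; simp [ht]
  | succ k ih =>
    rcases Nat.lt_or_ge k t with h | h
    · have : t = k + 1 := by omega
      subst this
      rw [Finset.sum_congr rfl fun j hj => if_pos (Finset.mem_range.mp hj)]
      simp [Finset.sum_const, mul_comm]
    · rw [Finset.sum_range_succ, ih h, if_neg (by omega)]
      have : k + 1 - t = (k - t) + 1 := by omega
      rw [this]; ring

noncomputable def q : ℕ → Matrix (Fin 2) (Fin 2) ℝ
  | 0 => !![1, 0; 0, 0]
  | 1 => !![1/4, Real.sqrt 3 / 4; Real.sqrt 3 / 4, 3/4]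
  | _ => !![1/4, -(Real.sqrt 3 / 4); -(Real.sqrt 3 / 4), 3/4]

lemma sqrt3_sq : Real.sqrt 3 * Real.sqrt 3 = 3 := Real.mul_self_sqrt (by norm_num)

lemma q_idem (j : ℕ) : q j * q j = q j := by
  match j with
  | 0 => simp [q]; ext i; fin_cases i <;>
      simp [Matrix.mul_apply, Fin.sum_univ_two]
  | 1 => ext i j; fin_cases i <;> fin_cases j <;>
      simp [q, Matrix.mul_apply, Fin.sum_univ_two] <;> nlinarith [sqrt3_sq]
  | (m+2) => ext i j; fin_cases i <;> fin_cases j <;>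
      simp [q, Matrix.mul_apply, Fin.sum_univ_two] <;> nlinarith [sqrt3_sq]

lemma q_symm (j : ℕ) : (q j)ᵀ = q j := by
  match j with
  | 0 => ext i j; fin_cases i <;> fin_cases j <;> simp [q]
  | 1 => ext i j; fin_cases i <;> fin_cases j <;> simp [q]
  | (m+2) => ext i j; fin_cases i <;> fin_cases j <;> simp [q]

lemma q_trace (j : ℕ) : (q j).trace = 1 := by
  match j with
  | 0 => simp [q, Matrix.trace_fin_two]
  | 1 => simp [q, Matrix.trace_fin_two]; norm_num
  | (m+2) => simp [q, Matrix.trace_fin_two]; norm_num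

lemma q_sum : q 0 + q 1 + q 2 = (3/2 : ℝ) • 1 := by
  ext i j
  fin_cases i <;> fin_cases j <;>
    simp [q, Matrix.one_apply] <;> norm_num

noncomputable def F (N : ℕ) (hdvd : 2 ∣ N) (j : ℕ) : Matrix (Fin N) (Fin N) ℝ :=
  (Matrix.reindexAlgEquiv ℝ ℝ (finProdFinEquiv.trans (finCongr (Nat.mul_div_cancel' hdvd))))
    (Matrix.blockDiagonal fun _ : Fin (N / 2) => q j)

lemma F_idem (N : ℕ) (hdvd : 2 ∣ N) (j : ℕ) : F N hdvd j * F N hdvd j = F N hdvd j := by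
  rw [F, ← _root_.map_mul, ← Matrix.blockDiagonal_mul]
  simp only [q_idem]

lemma F_symm (N : ℕ) (hdvd : 2 ∣ N) (j : ℕ) : (F N hdvd j)ᵀ = F N hdvd j := by
  rw [F, Matrix.reindexAlgEquiv_apply, Matrix.transpose_reindex, Matrix.blockDiagonal_transpose]
  simp only [q_symm]

lemma F_trace (N : ℕ) (hdvd : 2 ∣ N) (j : ℕ) : (F N hdvd j).trace = (N / 2 : ℕ) := by
  rw [F, Matrix.reindexAlgEquiv_apply]
  have : ∀ (M : Matrix (Fin 2 × Fin (N / 2)) (Fin 2 × Fin (N / 2)) ℝ)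
      (e : (Fin 2 × Fin (N / 2)) ≃ Fin N), (Matrix.reindex e e M).trace = M.trace := by
    intro M e
    simp only [Matrix.trace, Matrix.diag, Matrix.reindex_apply, Matrix.submatrix_apply]
    exact Equiv.sum_comp e.symm fun i => M i i
  rw [this, Matrix.trace_blockDiagonal]
  simp [q_trace]

lemma F_rank (N : ℕ) (hdvd : 2 ∣ N) (j : ℕ) : (F N hdvd j).rank = N / 2 := by
  have h := rank_cast_eq_trace (F N hdvd j) (F_idem N hdvd j)
  rw [F_trace] at h
  exact_mod_cast h

lemma F_sum (N : ℕ) (hdvd : 2 ∣ N) :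
    F N hdvd 0 + F N hdvd 1 + F N hdvd 2 = (3/2 : ℝ) • 1 := by
  rw [F, F, F, ← map_add, ← map_add, ← Matrix.blockDiagonal_add, ← Matrix.blockDiagonal_add]
  have h1 : (((fun _ : Fin (N / 2) => q 0) + fun _ => q 1) + fun _ => q 2)
      = fun _ : Fin (N / 2) => ((3/2 : ℝ) • 1 : Matrix (Fin 2) (Fin 2) ℝ) := by
    funext x
    simpa using q_sum
  rw [h1]
  have : (Matrix.blockDiagonal fun _ : Fin (N / 2) => ((3/2 : ℝ) • 1 : Matrix (Fin 2) (Fin 2) ℝ))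
      = (3/2 : ℝ) • Matrix.blockDiagonal fun _ : Fin (N / 2) => (1 : Matrix (Fin 2) (Fin 2) ℝ) := by
    ext ⟨i, a⟩ ⟨j, b⟩
    by_cases hab : a = b <;> simp [Matrix.blockDiagonal_apply, hab]
  have h2 : (Matrix.blockDiagonal fun _ : Fin (N / 2) => (1 : Matrix (Fin 2) (Fin 2) ℝ))
      = (1 : Matrix (Fin 2 × Fin (N / 2)) (Fin 2 × Fin (N / 2)) ℝ) := Matrix.blockDiagonal_one
  rw [this, h2, _root_.map_smul, _root_.map_one]

end TFFAux

open TFFAux in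
/-- For `α = n + 1/2` with `N` even, the sequence consisting of `n - 1` copies of `N`
followed by three copies of `N/2` is the unique maximal element of `TFF(α, N)` with
respect to majorization. -/
theorem TFF_max_half_integer (n N : ℕ) (hn : 0 < n) (hN : 0 < N) (hdvd : 2 ∣ N) :
    IsTFF N ((n : ℝ) + 1 / 2)
      (fun i : Fin (n + 2) => if (i : ℕ) < n - 1 then N else N / 2) ∧
    ∀ (K : ℕ) (L' : Fin K → ℕ), Antitone L' → (∀ i, 0 < L' i) →
      IsTFF N ((n : ℝ) + 1 / 2) L' →
      Majorizes L' (fun i : Fin (n + 2) => if (i : ℕ) < n - 1 then N else N / 2) := by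
  classical
  constructor
  · -- Construction
    refine ⟨fun i => if (i : ℕ) < n - 1 then 1 else TFFAux.F N hdvd ((i : ℕ) - (n - 1)),
      ?_, ?_, ?_, ?_⟩
    · intro i
      by_cases h : (i : ℕ) < n - 1 <;> simp [h, F_idem]
    · intro i
      by_cases h : (i : ℕ) < n - 1 <;> simp [h, F_symm]
    · intro i
      by_cases h : (i : ℕ) < n - 1 <;> simp [h, F_rank]
    · -- the sum
      have hrange : (∑ i : Fin (n + 2),
          (if (i : ℕ) < n - 1 then (1 : Matrix (Fin N) (Fin N) ℝ)
            else TFFAux.F N hdvd ((i : ℕ) - (n - 1))))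
          = ∑ j ∈ Finset.range (n + 2),
            (if j < n - 1 then (1 : Matrix (Fin N) (Fin N) ℝ)
              else TFFAux.F N hdvd (j - (n - 1))) :=
        Fin.sum_univ_eq_sum_range
          (fun j => if j < n - 1 then (1 : Matrix (Fin N) (Fin N) ℝ)
            else TFFAux.F N hdvd (j - (n - 1))) (n + 2)
      rw [hrange, Finset.range_eq_Ico,
        ← Finset.sum_Ico_consecutive _ (Nat.zero_le (n - 1)) (by omega : n - 1 ≤ n + 2)]
      have h1 : ∑ j ∈ Finset.Ico 0 (n - 1),
          (if j < n - 1 then (1 : Matrix (Fin N) (Fin N) ℝ)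
            else TFFAux.F N hdvd (j - (n - 1)))
          = (n - 1) • (1 : Matrix (Fin N) (Fin N) ℝ) := by
        rw [Finset.sum_congr rfl fun j hj => if_pos (by simp at hj; omega)]
        simp
      have h2 : ∑ j ∈ Finset.Ico (n - 1) (n + 2),
          (if j < n - 1 then (1 : Matrix (Fin N) (Fin N) ℝ)
            else TFFAux.F N hdvd (j - (n - 1)))
          = (3 / 2 : ℝ) • 1 := by
        rw [Finset.sum_Ico_eq_sum_range]
        have h3 : n + 2 - (n - 1) = 3 := by omega
        rw [h3]
        rw [Finset.sum_range_succ, Finset.sum_range_succ, Finset.sum_range_succ,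
          Finset.sum_range_zero]
        rw [if_neg (by omega), if_neg (by omega), if_neg (by omega)]
        have e0 : n - 1 + 0 - (n - 1) = 0 := by omega
        have e1 : n - 1 + 1 - (n - 1) = 1 := by omega
        have e2 : n - 1 + 2 - (n - 1) = 2 := by omega
        rw [e0, e1, e2, zero_add]
        exact F_sum N hdvd
      rw [h1, h2]
      rw [← Nat.cast_smul_eq_nsmul ℝ, ← add_smul]
      congr 1
      have : ((n - 1 : ℕ) : ℝ) = (n : ℝ) - 1 := by
        have : (1 : ℕ) ≤ n := hn
        push_cast [Nat.cast_sub this]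
        ring
      rw [this]
      ring
  · -- Maximality
    rintro K L' hanti hpos ⟨P, hidem, hsym, hrank, hsum⟩
    obtain ⟨m, hm⟩ := hdvd
    have hm2 : N / 2 = m := by omega
    -- trace of each projection equals its rank
    have htr : ∀ i, (P i).trace = (L' i : ℝ) := fun i => by
      rw [← hrank i, rank_cast_eq_trace (P i) (hidem i)]
    -- each rank is at most N
    have hle : ∀ i, L' i ≤ N := fun i => by
      rw [← hrank i]
      simpa using Matrix.rank_le_card_width (P i)
    -- 1 - P i is a projection
    have hidem1 : ∀ i, (1 - P i) * (1 - P i) = 1 - P i := fun i => by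
      have := hidem i
      noncomm_ring [this]
    have hsym1 : ∀ i, (1 - P i)ᵀ = 1 - P i := fun i => by
      rw [Matrix.transpose_sub, Matrix.transpose_one, hsym i]
    have hPSD : ∀ i, (P i).PosSemidef := fun i => posSemidef_of_proj _ (hidem i) (hsym i)
    have hPSD1 : ∀ i, (1 - P i).PosSemidef := fun i => posSemidef_of_proj _ (hidem1 i) (hsym1 i)
    -- rank of 1 - P i
    have hrank1 : ∀ i, (1 - P i).rank + L' i = N := fun i => by
      have h := rank_cast_eq_trace (1 - P i) (hidem1 i)
      rw [Matrix.trace_sub, Matrix.trace_one, htr i, Fintype.card_fin] at h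
      have : ((1 - P i).rank : ℝ) + (L' i : ℝ) = (N : ℝ) := by
        rw [h]; push_cast; ring
      exact_mod_cast this
    -- total sum
    have htotal : ∑ i, L' i = n * N + N / 2 := by
      have h : ((∑ i, L' i : ℕ) : ℝ) = ((n : ℝ) + 1 / 2) * N := by
        push_cast
        calc (∑ i, (L' i : ℝ)) = ∑ i, (P i).trace := by
              exact Finset.sum_congr rfl fun i _ => (htr i).symm
          _ = (∑ i, P i).trace := (Matrix.trace_sum _ _).symm
          _ = (((n : ℝ) + 1 / 2) • (1 : Matrix (Fin N) (Fin N) ℝ)).trace := by rw [hsum]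
          _ = ((n : ℝ) + 1 / 2) * N := by
              rw [Matrix.trace_smul, Matrix.trace_one]
              simp [smul_eq_mul]
      have h2 : ((n * N + N / 2 : ℕ) : ℝ) = ((n : ℝ) + 1 / 2) * N := by
        rw [hm2, hm]
        push_cast
        ring
      exact_mod_cast h.trans h2.symm
    -- Key inequality for k = n (valid whenever n ≤ K)
    have keyA : n ≤ K → N ≤ ∑ i ∈ Finset.univ.filter (fun i : Fin K => ¬ ((i : ℕ) < n)), L' i := by
      intro hnK
      have hcard : (Finset.univ.filter (fun i : Fin K => (i : ℕ) < n)).card = n :=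
        card_filter_lt n hnK
      have hsplit : (∑ i ∈ Finset.univ.filter (fun i : Fin K => (i : ℕ) < n), P i)
          + ∑ i ∈ Finset.univ.filter (fun i : Fin K => ¬ ((i : ℕ) < n)), P i
          = ((n : ℝ) + 1 / 2) • 1 := by
        rw [Finset.sum_filter_add_sum_filter_not, hsum]
      have hS : (∑ i ∈ Finset.univ.filter (fun i : Fin K => (i : ℕ) < n),
          (1 - P i)).PosSemidef := posSemidef_sum _ _ fun i _ => hPSD1 i
      have hsum2 : ∑ i ∈ Finset.univ.filter (fun i : Fin K => ¬ ((i : ℕ) < n)), P i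
          = (1 / 2 : ℝ) • 1
            + ∑ i ∈ Finset.univ.filter (fun i : Fin K => (i : ℕ) < n), (1 - P i) := by
        have hSe : ∑ i ∈ Finset.univ.filter (fun i : Fin K => (i : ℕ) < n), (1 - P i)
            = (n : ℝ) • (1 : Matrix (Fin N) (Fin N) ℝ)
              - ∑ i ∈ Finset.univ.filter (fun i : Fin K => (i : ℕ) < n), P i := by
          rw [Finset.sum_sub_distrib, Finset.sum_const, hcard, ← Nat.cast_smul_eq_nsmul ℝ]
        rw [hSe, eq_sub_of_add_eq' hsplit]
        have hsmul : ((n : ℝ) + 1 / 2) • (1 : Matrix (Fin N) (Fin N) ℝ)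
            = (1 / 2 : ℝ) • 1 + (n : ℝ) • 1 := by
          rw [← add_smul]; ring_nf
        rw [hsmul, add_sub_assoc]
      have hkey := card_le_sum_rank P
        (Finset.univ.filter (fun i : Fin K => ¬ ((i : ℕ) < n))) (by norm_num : (0:ℝ) < 1/2)
        _ hS hsum2
      calc N ≤ ∑ i ∈ Finset.univ.filter (fun i : Fin K => ¬ ((i : ℕ) < n)), (P i).rank := hkey
        _ = _ := Finset.sum_congr rfl fun i _ => hrank i
    -- Key inequality for k = n + 1 (valid whenever n + 1 ≤ K)
    have keyB : n + 1 ≤ K →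
        ∑ i ∈ Finset.univ.filter (fun i : Fin K => (i : ℕ) < n + 1), L' i ≤ n * N := by
      intro hnK
      have hcard : (Finset.univ.filter (fun i : Fin K => (i : ℕ) < n + 1)).card = n + 1 :=
        card_filter_lt (n + 1) hnK
      have hsplit : (∑ i ∈ Finset.univ.filter (fun i : Fin K => (i : ℕ) < n + 1), P i)
          + ∑ i ∈ Finset.univ.filter (fun i : Fin K => ¬ ((i : ℕ) < n + 1)), P i
          = ((n : ℝ) + 1 / 2) • 1 := by
        rw [Finset.sum_filter_add_sum_filter_not, hsum]
      have hS : (∑ i ∈ Finset.univ.filter (fun i : Fin K => ¬ ((i : ℕ) < n + 1)),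
          P i).PosSemidef := posSemidef_sum _ _ fun i _ => hPSD i
      have hsum2 : ∑ i ∈ Finset.univ.filter (fun i : Fin K => (i : ℕ) < n + 1), (1 - P i)
          = (1 / 2 : ℝ) • 1
            + ∑ i ∈ Finset.univ.filter (fun i : Fin K => ¬ ((i : ℕ) < n + 1)), P i := by
        have hSe : ∑ i ∈ Finset.univ.filter (fun i : Fin K => (i : ℕ) < n + 1), (1 - P i)
            = ((n : ℝ) + 1) • (1 : Matrix (Fin N) (Fin N) ℝ)
              - ∑ i ∈ Finset.univ.filter (fun i : Fin K => (i : ℕ) < n + 1), P i := by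
          rw [Finset.sum_sub_distrib, Finset.sum_const, hcard, ← Nat.cast_smul_eq_nsmul ℝ]
          push_cast
          ring_nf
        rw [hSe, eq_sub_of_add_eq hsplit]
        have hsmul : ((n : ℝ) + 1) • (1 : Matrix (Fin N) (Fin N) ℝ)
            = (1 / 2 : ℝ) • 1 + ((n : ℝ) + 1 / 2) • 1 := by
          rw [← add_smul]; ring_nf
        rw [hsmul]
        abel
      have hkey := card_le_sum_rank (fun i => 1 - P i)
        (Finset.univ.filter (fun i : Fin K => (i : ℕ) < n + 1)) (by norm_num : (0:ℝ) < 1/2)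
        _ hS hsum2
      have hkey' : N ≤ ∑ i ∈ Finset.univ.filter (fun i : Fin K => (i : ℕ) < n + 1),
          (1 - P i).rank := hkey
      clear hkey
      have hsum3 : ∑ i ∈ Finset.univ.filter (fun i : Fin K => (i : ℕ) < n + 1),
          ((1 - P i).rank + L' i) = (n + 1) * N := by
        rw [Finset.sum_congr rfl fun i _ => hrank1 i, Finset.sum_const, hcard, smul_eq_mul]
      rw [Finset.sum_add_distrib] at hsum3
      have hmul : (n + 1) * N = n * N + N := Nat.succ_mul n N
      rw [hmul] at hsum3
      generalize hgen : n * N = w at hsum3 ⊢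
      omega
    have hmul : n * N = (n - 1) * N + N := by
      rcases n with _ | p
      · exact absurd hn (lt_irrefl 0)
      · simp [Nat.succ_sub_one, Nat.succ_mul]
    constructor
    · -- equality of total sums
      have hT : (∑ i : Fin (n + 2), (if (i : ℕ) < n - 1 then N else N / 2)) = n * N + N / 2 := by
        have h0 : (∑ i : Fin (n + 2), (if (i : ℕ) < n - 1 then N else N / 2))
            = ∑ j ∈ Finset.range (n + 2), (if j < n - 1 then N else N / 2) :=
          Fin.sum_univ_eq_sum_range (fun j => if j < n - 1 then N else N / 2) (n + 2)
        rw [h0, sum_ite_lt N (N / 2) (n - 1) (n + 2) (by omega)]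
        have h3 : n + 2 - (n - 1) = 3 := by omega
        rw [h3, hm2, hmul, hm]
        ring
      rw [htotal, hT]
    · -- partial sums
      intro k hk
      have hkK : k ≤ K := le_trans hk (Nat.min_le_left _ _)
      have hk2 : k ≤ n + 2 := le_trans hk (Nat.min_le_right _ _)
      rw [sum_filter_lt L' k hkK, sum_filter_lt _ k hk2]
      have hB0 : (∑ j : Fin k,
          (if ((Fin.castLE hk2 j : Fin (n + 2)) : ℕ) < n - 1 then N else N / 2))
          = ∑ j ∈ Finset.range k, (if j < n - 1 then N else N / 2) :=
        Fin.sum_univ_eq_sum_range (fun j => if j < n - 1 then N else N / 2) k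
      rw [hB0]
      rcases Nat.lt_or_ge (n - 1) k with hcase | hcase
      · -- n - 1 < k, so k = n, n+1 or n+2
        rw [sum_ite_lt N (N / 2) (n - 1) k (by omega)]
        have hA0 : (∑ j : Fin k, L' (Fin.castLE hkK j))
            = ∑ i ∈ Finset.univ.filter (fun i : Fin K => (i : ℕ) < k), L' i :=
          (sum_filter_lt L' k hkK).symm
        rw [hA0]
        have hk3 : k = n ∨ k = n + 1 ∨ k = n + 2 := by omega
        rcases hk3 with h | h | h
        · -- k = n
          rw [h]
          have hX := keyA (h ▸ hkK)
          have hsplitN : (∑ i ∈ Finset.univ.filter (fun i : Fin K => (i : ℕ) < n), L' i)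
              + ∑ i ∈ Finset.univ.filter (fun i : Fin K => ¬ ((i : ℕ) < n)), L' i
              = ∑ i, L' i := Finset.sum_filter_add_sum_filter_not _ _ _
          rw [htotal, hmul] at hsplitN
          have h4 : n - (n - 1) = 1 := by omega
          rw [h4, hm2]
          rw [hm2] at hsplitN
          generalize hgen : (n - 1) * N = w at hsplitN ⊢
          omega
        · -- k = n + 1
          rw [h]
          have hX := keyB (h ▸ hkK)
          rw [hmul] at hX
          have h4 : n + 1 - (n - 1) = 2 := by omega
          rw [h4, hm2]
          generalize hgen : (n - 1) * N = w at hX ⊢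
          omega
        · -- k = n + 2
          rw [h]
          have hX : (∑ i ∈ Finset.univ.filter (fun i : Fin K => (i : ℕ) < n + 2), L' i)
              ≤ ∑ i, L' i :=
            Finset.sum_le_sum_of_subset (Finset.filter_subset _ _)
          rw [htotal, hmul, hm2] at hX
          have h4 : n + 2 - (n - 1) = 3 := by omega
          rw [h4, hm2]
          generalize hgen : (n - 1) * N = w at hX ⊢
          omega
      · -- k ≤ n - 1
        rw [Finset.sum_congr rfl fun j hj => if_pos (lt_of_lt_of_le (Finset.mem_range.mp hj) hcase)]
        rw [Finset.sum_const, Finset.card_range, smul_eq_mul]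
        calc (∑ j : Fin k, L' (Fin.castLE hkK j)) ≤ ∑ _j : Fin k, N :=
              Finset.sum_le_sum fun j _ => hle _
          _ = k * N := by simp [mul_comm]
end

section
/- Let (L_1 ≥ L_2 ≥ ⋯ ≥ L_K) ∈ TFF(α, N) and let k be an integer with 2 ≤ k ≤ K. If α < k/(k−1), then L_1 + L_2 + ⋯ + L_k ≤ N. -/
open Matrix

private lemma dot_sum_right {n : ℕ} {ι : Type*} (s : Finset ι) (v : Fin n → ℝ)
    (y : ι → Fin n → ℝ) : v ⬝ᵥ (∑ i ∈ s, y i) = ∑ i ∈ s, v ⬝ᵥ y i := by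
  simp only [dotProduct, Finset.sum_apply, Finset.mul_sum]
  exact Finset.sum_comm

private lemma sum_dot_left {n : ℕ} {ι : Type*} (s : Finset ι) (v : Fin n → ℝ)
    (y : ι → Fin n → ℝ) : (∑ i ∈ s, y i) ⬝ᵥ v = ∑ i ∈ s, y i ⬝ᵥ v := by
  simp only [dotProduct, Finset.sum_apply, Finset.sum_mul]
  exact Finset.sum_comm

private lemma sum_mulVec' {n : ℕ} {ι : Type*} (s : Finset ι)
    (P : ι → Matrix (Fin n) (Fin n) ℝ) (y : Fin n → ℝ) :
    (∑ i ∈ s, P i) *ᵥ y = ∑ i ∈ s, P i *ᵥ y := by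
  classical
  induction s using Finset.induction with
  | empty => simp
  | insert _ _ hni ih => rw [Finset.sum_insert hni, Finset.sum_insert hni, Matrix.add_mulVec, ih]

private lemma dot_self_nonneg {n : ℕ} (v : Fin n → ℝ) : 0 ≤ v ⬝ᵥ v :=
  Finset.sum_nonneg fun i _ => mul_self_nonneg _

private lemma neg_dot_le {n : ℕ} (c : ℝ) (hc : 0 < c) (u v : Fin n → ℝ) :
    -(u ⬝ᵥ v) ≤ c / 2 * (u ⬝ᵥ u) + 1 / (2 * c) * (v ⬝ᵥ v) := by
  have h : ∀ i : Fin n, -(u i * v i) ≤ c / 2 * (u i * u i) + 1 / (2 * c) * (v i * v i) := by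
    intro i
    have hc0 : c ≠ 0 := ne_of_gt hc
    have key : c / 2 * (u i * u i) + 1 / (2 * c) * (v i * v i) + u i * v i
        = 1 / (2 * c) * (c * u i + v i) ^ 2 := by
      field_simp
      ring
    have hnn : 0 ≤ 1 / (2 * c) * (c * u i + v i) ^ 2 := by positivity
    linarith
  simp only [dotProduct]
  calc -(∑ i, u i * v i) = ∑ i, -(u i * v i) := by rw [Finset.sum_neg_distrib]
    _ ≤ ∑ i, (c / 2 * (u i * u i) + 1 / (2 * c) * (v i * v i)) :=
        Finset.sum_le_sum fun i _ => h i
    _ = _ := by rw [Finset.sum_add_distrib, ← Finset.mul_sum, ← Finset.mul_sum]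

/-- If `(L_1 ≥ ⋯ ≥ L_K) ∈ TFF(α, N)`, `2 ≤ k ≤ K` and `α < k/(k-1)`, then
`L_1 + ⋯ + L_k ≤ N`. -/
theorem TFF_first_k_ranks_le {K N : ℕ} (α : ℝ)
    (L : Fin K → ℕ) (hL : Antitone L) (hpos : ∀ i, 0 < L i)
    (h : IsTFF N α L)
    (k : ℕ) (hk2 : 2 ≤ k) (hkK : k ≤ K)
    (hα : α < (k : ℝ) / ((k : ℝ) - 1)) :
    ∑ i ∈ Finset.univ.filter (fun i : Fin K => (i : ℕ) < k), L i ≤ N := by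
  by_contra hcon
  push_neg at hcon
  obtain ⟨P, hidem, hsymm, hrank, hsum⟩ := h
  set S : Finset (Fin K) := Finset.univ.filter (fun i : Fin K => (i : ℕ) < k) with hS
  -- basic facts about `S`
  have hcard : S.card = k := by
    rw [hS]
    rw [show Finset.univ.filter (fun i : Fin K => (i : ℕ) < k)
        = Finset.map (Fin.castLEEmb hkK) Finset.univ from ?_]
    · rw [Finset.card_map, Finset.card_univ, Fintype.card_fin]
    · ext i
      simp only [Finset.mem_filter, Finset.mem_univ, true_and, Finset.mem_map,
        Fin.castLEEmb_apply]
      constructor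
      · intro hi
        exact ⟨⟨(i : ℕ), hi⟩, by ext; simp⟩
      · rintro ⟨j, rfl⟩
        exact j.isLt
  -- symmetry and idempotency consequences
  have hsy : ∀ (i : Fin K) (u v : Fin N → ℝ),
      (P i *ᵥ u) ⬝ᵥ v = u ⬝ᵥ (P i *ᵥ v) := by
    intro i u v
    have h1 : u ⬝ᵥ (P i *ᵥ v) = ((P i)ᵀ *ᵥ u) ⬝ᵥ v := by
      rw [dotProduct_mulVec, mulVec_transpose]
    rw [h1, hsymm i]
  have hself : ∀ (i : Fin K) (u : Fin N → ℝ),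
      u ⬝ᵥ (P i *ᵥ u) = (P i *ᵥ u) ⬝ᵥ (P i *ᵥ u) := by
    intro i u
    calc u ⬝ᵥ (P i *ᵥ u) = u ⬝ᵥ ((P i * P i) *ᵥ u) := by rw [hidem i]
      _ = u ⬝ᵥ (P i *ᵥ (P i *ᵥ u)) := by rw [mulVec_mulVec]
      _ = (P i *ᵥ u) ⬝ᵥ (P i *ᵥ u) := (hsy i u (P i *ᵥ u)).symm
  have hframe : ∀ u : Fin N → ℝ,
      ∑ i : Fin K, u ⬝ᵥ (P i *ᵥ u) = α * (u ⬝ᵥ u) := by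
    intro u
    rw [← dot_sum_right, ← sum_mulVec', hsum, smul_mulVec, one_mulVec]
    simp [dotProduct, Finset.mul_sum, mul_assoc, mul_left_comm]
  have hfix : ∀ (i : Fin K) (v : Fin N → ℝ),
      v ∈ LinearMap.range (P i).mulVecLin → P i *ᵥ v = v := by
    rintro i v ⟨w, rfl⟩
    rw [Matrix.mulVecLin_apply, mulVec_mulVec, hidem i]
  -- the dimension argument: find a nontrivial dependence
  let ι := {i : Fin K // i ∈ S}
  let W : ι → Submodule ℝ (Fin N → ℝ) := fun i => LinearMap.range (P i.1).mulVecLin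
  let φ : ((i : ι) → W i) →ₗ[ℝ] (Fin N → ℝ) :=
    { toFun := fun f => ∑ i : ι, (f i : Fin N → ℝ)
      map_add' := by intro f g; simp [Finset.sum_add_distrib]
      map_smul' := by intro c f; simp [Finset.smul_sum] }
  have hdim : Module.finrank ℝ ((i : ι) → W i) = ∑ i ∈ S, L i := by
    rw [Module.finrank_pi_fintype, ← Finset.sum_coe_sort S (fun i => L i)]
    refine Finset.sum_congr rfl fun i _ => ?_
    have := hrank i.1
    simpa [Matrix.rank] using this
  have hninj : ¬ Function.Injective φ := by
    intro hinj
    have hle := LinearMap.finrank_le_finrank_of_injective hinj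
    rw [hdim, Module.finrank_fin_fun] at hle
    omega
  obtain ⟨f, hfker, hf0⟩ : ∃ f : (i : ι) → W i, φ f = 0 ∧ f ≠ 0 := by
    have : LinearMap.ker φ ≠ ⊥ := fun hh => hninj (LinearMap.ker_eq_bot.mp hh)
    obtain ⟨f, hf, hf0⟩ := (Submodule.ne_bot_iff _).mp this
    exact ⟨f, hf, hf0⟩
  set y : ι → (Fin N → ℝ) := fun i => (f i : Fin N → ℝ) with hy
  have hy0 : ∑ i : ι, y i = 0 := hfker
  have hyW : ∀ i : ι, P i.1 *ᵥ y i = y i := fun i => hfix i.1 (y i) (f i).2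
  have hyne : ∃ i : ι, y i ≠ 0 := by
    by_contra hall
    push_neg at hall
    apply hf0
    funext i
    exact Subtype.ext (hall i)
  -- quadratic quantities
  set nn : ι → ℝ := fun j => y j ⬝ᵥ y j with hnn
  set a : ι → ι → ℝ := fun m j => (P m.1 *ᵥ y j) ⬝ᵥ (P m.1 *ᵥ y j) with ha
  have ha_nonneg : ∀ m j : ι, 0 ≤ a m j := fun m j => dot_self_nonneg _
  have haa : ∀ m : ι, a m m = nn m := by
    intro m; rw [ha, hnn]; simp only; rw [hyW m]
  set T : ℝ := ∑ j : ι, nn j with hTdef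
  have hT : 0 < T := by
    obtain ⟨i0, hi0⟩ := hyne
    refine Finset.sum_pos' (fun j _ => dot_self_nonneg _) ⟨i0, Finset.mem_univ _, ?_⟩
    have hne : y i0 ⬝ᵥ y i0 ≠ 0 := fun h0 => hi0 (dotProduct_self_eq_zero.mp h0)
    exact lt_of_le_of_ne (dot_self_nonneg _) (Ne.symm hne)
  have hcardι : Fintype.card ι = k := by rw [Fintype.card_coe, hcard]
  -- inequality (A)
  have hA : ∀ j : ι, ∑ m : ι, a m j ≤ α * nn j := by
    intro j
    calc ∑ m : ι, a m j
        = ∑ m ∈ S, (P m *ᵥ y j) ⬝ᵥ (P m *ᵥ y j) :=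
          Finset.sum_coe_sort S (fun m => (P m *ᵥ y j) ⬝ᵥ (P m *ᵥ y j))
      _ ≤ ∑ m : Fin K, (P m *ᵥ y j) ⬝ᵥ (P m *ᵥ y j) :=
          Finset.sum_le_sum_of_subset_of_nonneg (Finset.subset_univ S)
            (fun i _ _ => dot_self_nonneg _)
      _ = ∑ m : Fin K, y j ⬝ᵥ (P m *ᵥ y j) :=
          Finset.sum_congr rfl fun m _ => (hself m (y j)).symm
      _ = α * nn j := hframe (y j)
  -- inequality (B)
  have hk1 : (1:ℝ) ≤ (k:ℝ) := by exact_mod_cast (by omega : 1 ≤ k)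
  have hk2' : (2:ℝ) ≤ (k:ℝ) := by exact_mod_cast hk2
  set c : ℝ := (k : ℝ) - 1 with hcdef
  have hc : 0 < c := by rw [hcdef]; linarith
  have hB : ∀ m : ι, nn m ≤ c * ∑ j ∈ Finset.univ.erase m, a m j := by
    intro m
    have hym : y m = -∑ j ∈ Finset.univ.erase m, y j := by
      have h0 := hy0
      rw [← Finset.add_sum_erase _ _ (Finset.mem_univ m)] at h0
      exact eq_neg_of_add_eq_zero_left h0
    have h1 : nn m = ∑ j ∈ Finset.univ.erase m, -((P m.1 *ᵥ y j) ⬝ᵥ y m) := by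
      calc nn m = y m ⬝ᵥ y m := rfl
        _ = (-∑ j ∈ Finset.univ.erase m, y j) ⬝ᵥ y m := by rw [← hym]
        _ = -∑ j ∈ Finset.univ.erase m, y j ⬝ᵥ y m := by
            rw [neg_dotProduct, sum_dot_left]
        _ = ∑ j ∈ Finset.univ.erase m, -(y j ⬝ᵥ y m) := by
            rw [Finset.sum_neg_distrib]
        _ = ∑ j ∈ Finset.univ.erase m, -((P m.1 *ᵥ y j) ⬝ᵥ y m) := by
            refine Finset.sum_congr rfl fun j _ => ?_
            rw [hsy m.1 (y j) (y m), hyW m]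
    have hcard' : ((Finset.univ.erase m).card : ℝ) = c := by
      rw [Finset.card_erase_of_mem (Finset.mem_univ m), Finset.card_univ, hcardι, hcdef]
      have h1k : 1 ≤ k := by omega
      push_cast [h1k]
      ring
    have h3 : nn m ≤ c / 2 * (∑ j ∈ Finset.univ.erase m, a m j) + 1 / 2 * nn m := by
      calc nn m = ∑ j ∈ Finset.univ.erase m, -((P m.1 *ᵥ y j) ⬝ᵥ y m) := h1
        _ ≤ ∑ j ∈ Finset.univ.erase m, (c / 2 * a m j + 1 / (2 * c) * nn m) :=
            Finset.sum_le_sum fun j _ => neg_dot_le c hc _ _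
        _ = c / 2 * (∑ j ∈ Finset.univ.erase m, a m j)
            + ((Finset.univ.erase m).card : ℝ) * (1 / (2 * c) * nn m) := by
            rw [Finset.sum_add_distrib, ← Finset.mul_sum, Finset.sum_const, nsmul_eq_mul]
        _ = c / 2 * (∑ j ∈ Finset.univ.erase m, a m j) + 1 / 2 * nn m := by
            rw [hcard']
            have hcne : c ≠ 0 := ne_of_gt hc
            field_simp
    have h4 : (1:ℝ) / 2 * nn m ≤ c / 2 * ∑ j ∈ Finset.univ.erase m, a m j := by
      linarith
    calc nn m = 2 * ((1:ℝ) / 2 * nn m) := by ring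
      _ ≤ 2 * (c / 2 * ∑ j ∈ Finset.univ.erase m, a m j) := by linarith
      _ = c * ∑ j ∈ Finset.univ.erase m, a m j := by ring
  -- summing up
  have hsumB : T ≤ c * (α - 1) * T := by
    have e1 : ∀ m : ι, ∑ j ∈ Finset.univ.erase m, a m j = (∑ j : ι, a m j) - nn m := by
      intro m
      rw [← Finset.add_sum_erase _ _ (Finset.mem_univ m), haa m]
      ring
    have h4 : T ≤ c * ∑ m : ι, ((∑ j : ι, a m j) - nn m) := by
      calc T = ∑ m : ι, nn m := rfl
        _ ≤ ∑ m : ι, c * ∑ j ∈ Finset.univ.erase m, a m j :=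
            Finset.sum_le_sum fun m _ => hB m
        _ = c * ∑ m : ι, ((∑ j : ι, a m j) - nn m) := by
            rw [← Finset.mul_sum]
            congr 1
            exact Finset.sum_congr rfl fun m _ => by rw [e1 m]
    have h5 : ∑ m : ι, ((∑ j : ι, a m j) - nn m) ≤ (α - 1) * T := by
      rw [Finset.sum_sub_distrib]
      have h6 : ∑ m : ι, ∑ j : ι, a m j ≤ α * T := by
        rw [Finset.sum_comm]
        calc ∑ j : ι, ∑ m : ι, a m j ≤ ∑ j : ι, α * nn j :=
              Finset.sum_le_sum fun j _ => hA j
          _ = α * T := by rw [← Finset.mul_sum]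
      have : (∑ m : ι, nn m) = T := rfl
      rw [this]
      linarith
    calc T ≤ c * ∑ m : ι, ((∑ j : ι, a m j) - nn m) := h4
      _ ≤ c * ((α - 1) * T) := mul_le_mul_of_nonneg_left h5 hc.le
      _ = c * (α - 1) * T := by ring
  have hlt1 : c * (α - 1) < 1 := by
    have hmul : α * c < k := by
      have := (lt_div_iff₀ hc).mp hα
      linarith
    rw [hcdef] at *
    nlinarith
  nlinarith [mul_lt_mul_of_pos_right hlt1 hT, hsumB]
end

section
/- (Combinatorial Naimark duality) Fix a positive integer N and a weakly decreasing sequence (L_1 ≥ ⋯ ≥ L_K) of positive integers with L_1 ≤ N, set M = Σ_{i=1}^K L_i, and suppose M > N. Then the number of configuration matrices for (L_1, …, L_K; N) (these are N×M matrices with row sums M and column sums N) equals the number of configuration matrices for (L_1, …, L_K; M−N) (these are (M−N)×M matrices with row sums M and column sums M−N, with the same block widths L_1,…,L_K). Equivalently, the Littlewood-Richardson coefficients satisfy c((N^{L_1}),…,(N^{L_K});(M^N)) = c(((M−N)^{L_1}),…,((M−N)^{L_K});(M^{M−N})). -/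
open Matrix

/-- The starting (0-based) column index of the `k`-th block in a matrix whose `i`-th
column block has `L i` columns. -/
def blockStart {K : ℕ} (L : Fin K → ℕ) (k : Fin K) : ℕ :=
  ∑ i ∈ Finset.univ.filter (fun i : Fin K => i < k), L i

/-- `A` is a configuration matrix for `(L_1, …, L_K; N)`: an `N × M` matrix
(`M = Σᵢ Lᵢ`) with (i) nonnegative integer entries, (ii) all row sums `M`,
(iii) all column sums `N`, (iv) row sum dominance
`Σ_{j ≤ l} (A[i,j] - A[i+1,j]) ≥ A[i+1, l+1]`, and (v) column sum dominance
`Σ_{i ≤ l} (A[i,j] - A[i,j+1]) ≥ A[l+1, j+1]` within each column block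
(indices here 0-based; the comparisons are stated with sums moved to one side). -/
def IsConfig (N K M : ℕ) (L : Fin K → ℕ) (A : Matrix (Fin N) (Fin M) ℤ) : Prop :=
  (M = ∑ i, L i) ∧
  (∀ i j, 0 ≤ A i j) ∧
  (∀ i, ∑ j, A i j = M) ∧
  (∀ j, ∑ i, A i j = N) ∧
  (∀ i i' : Fin N, (i' : ℕ) = (i : ℕ) + 1 →
    ∀ l : Fin M,
      A i' l ≤ ∑ j ∈ Finset.univ.filter (fun j : Fin M => (j : ℕ) < (l : ℕ)),
        (A i j - A i' j)) ∧
  (∀ k : Fin K, ∀ c c' : Fin M, (c' : ℕ) = (c : ℕ) + 1 →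
    blockStart L k ≤ (c : ℕ) → (c' : ℕ) < blockStart L k + L k →
    ∀ r : Fin N,
      A r c' ≤ ∑ i ∈ Finset.univ.filter (fun i : Fin N => (i : ℕ) < (r : ℕ)),
        (A i c - A i c'))

namespace CfgDual

variable {n m : ℕ}

/-- Extension of a matrix to all of `ℕ × ℕ` by zero. -/
def extA (A : Matrix (Fin n) (Fin m) ℤ) (i j : ℕ) : ℤ :=
  if h : i < n ∧ j < m then A ⟨i, h.1⟩ ⟨j, h.2⟩ else 0

lemma extA_eq (A : Matrix (Fin n) (Fin m) ℤ) (i : Fin n) (j : Fin m) :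
    extA A i j = A i j := by
  simp [extA, i.isLt, j.isLt]

lemma extA_nonneg {A : Matrix (Fin n) (Fin m) ℤ} (h0 : ∀ i j, 0 ≤ A i j) (i j : ℕ) :
    0 ≤ extA A i j := by
  unfold extA; split <;> simp [h0]

/-- partial row sums over whole rows give `m`. -/
lemma sum_ext_row {A : Matrix (Fin n) (Fin m) ℤ} (hrow : ∀ i, ∑ j, A i j = m)
    (i : ℕ) (hi : i < n) {j : ℕ} (hj : m ≤ j) :
    ∑ c ∈ Finset.range j, extA A i c = m := by
  rw [← Finset.sum_subset (Finset.range_subset_range.2 hj)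
    (by intro x _ hx; simp only [Finset.mem_range, not_lt] at hx
        simp [extA, Nat.not_lt.2 hx])]
  rw [← Fin.sum_univ_eq_sum_range (fun c => extA A i c) m]
  rw [show (∑ c : Fin m, extA A i c) = ∑ c : Fin m, A ⟨i, hi⟩ c from
    Finset.sum_congr rfl (fun c _ => extA_eq A ⟨i, hi⟩ c)]
  exact hrow ⟨i, hi⟩

lemma sum_ext_row_le {A : Matrix (Fin n) (Fin m) ℤ} (h0 : ∀ i j, 0 ≤ A i j)
    (hrow : ∀ i, ∑ j, A i j = m) (i : ℕ) (hi : i < n) (j : ℕ) :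
    ∑ c ∈ Finset.range j, extA A i c ≤ m := by
  calc ∑ c ∈ Finset.range j, extA A i c
      ≤ ∑ c ∈ Finset.range (max j m), extA A i c := by
        apply Finset.sum_le_sum_of_subset_of_nonneg
          (Finset.range_subset_range.2 (le_max_left _ _))
        intro c _ _; exact extA_nonneg h0 i c
    _ = m := sum_ext_row hrow i hi (le_max_right _ _)

lemma sum_ext_col {A : Matrix (Fin n) (Fin m) ℤ} (hcol : ∀ j, ∑ i, A i j = n)
    (c : ℕ) (hc : c < m) :
    ∑ i ∈ Finset.range n, extA A i c = n := by
  rw [← Fin.sum_univ_eq_sum_range (fun i => extA A i c) n]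
  rw [show (∑ i : Fin n, extA A i c) = ∑ i : Fin n, A i ⟨c, hc⟩ from
    Finset.sum_congr rfl (fun i _ => extA_eq A i ⟨c, hc⟩)]
  exact hcol ⟨c, hc⟩

def lam (A : Matrix (Fin n) (Fin m) ℤ) (j : ℕ) (r : ℤ) : ℤ :=
  if r ≤ 0 then (m : ℤ) else if (n : ℤ) < r then 0
  else ∑ c ∈ Finset.range j, extA A (r.toNat - 1) c

lemma lam_nonpos (A : Matrix (Fin n) (Fin m) ℤ) (j : ℕ) {r : ℤ} (hr : r ≤ 0) :
    lam A j r = m := by simp [lam, hr]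

lemma lam_hi (A : Matrix (Fin n) (Fin m) ℤ) (j : ℕ) {r : ℤ} (hr : (n : ℤ) < r) :
    lam A j r = 0 := by
  have : ¬ r ≤ 0 := by omega
  simp [lam, this, hr]

lemma lam_mid (A : Matrix (Fin n) (Fin m) ℤ) (j : ℕ) {i : ℕ} (hi : i < n) :
    lam A j ((i : ℤ) + 1) = ∑ c ∈ Finset.range j, extA A i c := by
  have h1 : ¬ ((i : ℤ) + 1 ≤ 0) := by omega
  have h2 : ¬ ((n : ℤ) < (i : ℤ) + 1) := by omega
  have h3 : ((i : ℤ) + 1).toNat - 1 = i := by omega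
  simp [lam, h1, h2, h3]

/-- generic form of lam in the middle range -/
lemma lam_mid' (A : Matrix (Fin n) (Fin m) ℤ) (j : ℕ) {r : ℤ} (h1 : 1 ≤ r)
    (h2 : r ≤ n) : lam A j r = ∑ c ∈ Finset.range j, extA A (r.toNat - 1) c := by
  have hh1 : ¬ (r ≤ 0) := by omega
  have hh2 : ¬ ((n : ℤ) < r) := by omega
  simp [lam, hh1, hh2]

lemma lam_nonneg {A : Matrix (Fin n) (Fin m) ℤ} (h0 : ∀ i j, 0 ≤ A i j)
    (j : ℕ) (r : ℤ) : 0 ≤ lam A j r := by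
  unfold lam; split
  · positivity
  · split
    · exact le_refl 0
    · exact Finset.sum_nonneg fun c _ => extA_nonneg h0 _ c

lemma lam_le {A : Matrix (Fin n) (Fin m) ℤ} (h0 : ∀ i j, 0 ≤ A i j)
    (hrow : ∀ i, ∑ j, A i j = m) (j : ℕ) (r : ℤ) : lam A j r ≤ m := by
  unfold lam; split
  · exact le_refl _
  · split
    · positivity
    · next h1 h2 =>
      exact sum_ext_row_le h0 hrow _ (by omega) j

lemma lam_mono {A : Matrix (Fin n) (Fin m) ℤ} (h0 : ∀ i j, 0 ≤ A i j)
    (j : ℕ) (r : ℤ) : lam A j r ≤ lam A (j + 1) r := by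
  unfold lam; split
  · exact le_refl _
  · split
    · exact le_refl _
    · rw [Finset.sum_range_succ]
      exact le_add_of_nonneg_right (extA_nonneg h0 _ _)

/-- convert a `Fin`-filter sum to a `range` sum -/
lemma sum_filter_lt {M₀ : Type*} [AddCommMonoid M₀] {mm : ℕ} (l : ℕ) (hl : l ≤ mm)
    (f : Fin mm → M₀) (F : ℕ → M₀) (hF : ∀ j : Fin mm, F j.val = f j) :
    ∑ j ∈ Finset.univ.filter (fun j : Fin mm => (j : ℕ) < l), f j
      = ∑ t ∈ Finset.range l, F t := by
  rw [Finset.sum_filter]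
  rw [show (∑ j : Fin mm, if (j : ℕ) < l then f j else 0)
      = ∑ j : Fin mm, (fun t : ℕ => if t < l then F t else 0) (j : ℕ) from
    Finset.sum_congr rfl (fun j _ => by by_cases h : (j : ℕ) < l <;> simp [h, hF j])]
  rw [Fin.sum_univ_eq_sum_range (fun t : ℕ => if t < l then F t else 0) mm]
  rw [← Finset.sum_subset (Finset.range_subset_range.2 hl)
    (by intro x _ hx; simp only [Finset.mem_range, not_lt] at hx
        simp [Nat.not_lt.2 hx])]
  exact Finset.sum_congr rfl (fun t ht => by simp [Finset.mem_range.1 ht])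

lemma interlace {A : Matrix (Fin n) (Fin m) ℤ} (h0 : ∀ i j, 0 ≤ A i j)
    (hrow : ∀ i, ∑ j, A i j = m)
    (hiv : ∀ i i' : Fin n, (i' : ℕ) = (i : ℕ) + 1 →
      ∀ l : Fin m,
        A i' l ≤ ∑ j ∈ Finset.univ.filter (fun j : Fin m => (j : ℕ) < (l : ℕ)),
          (A i j - A i' j))
    {j : ℕ} (hj : j < m) (r : ℤ) : lam A (j + 1) (r + 1) ≤ lam A j r := by
  rcases le_or_gt r (-1) with h | h
  · rw [lam_nonpos A _ (by omega), lam_nonpos A _ (by omega)]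
  rcases eq_or_lt_of_le (show (0:ℤ) ≤ r by omega) with h0r | h0r
  · rw [lam_nonpos A j (by omega)]
    exact lam_le h0 hrow _ _
  rcases lt_or_ge r n with hrn | hrn
  · -- main case: 1 ≤ r ≤ n - 1
    have hr1 : 1 ≤ r := h0r
    set i : ℕ := r.toNat - 1 with hi
    have hin : i + 1 < n := by omega
    have key := hiv ⟨i, by omega⟩ ⟨i + 1, hin⟩ rfl ⟨j, hj⟩
    rw [sum_filter_lt j (le_of_lt hj) _
      (fun t => extA A i t - extA A (i+1) t)
      (fun c => by
        show extA A i (c:ℕ) - extA A (i+1) (c:ℕ) = _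
        rw [← extA_eq A ⟨i, by omega⟩ c, ← extA_eq A ⟨i+1, hin⟩ c])] at key
    rw [lam_mid' A (j+1) (by omega) (by omega), lam_mid' A j hr1 (by omega)]
    have har : (r+1).toNat - 1 = i + 1 := by omega
    have har' : r.toNat - 1 = i := rfl
    rw [har, har', Finset.sum_range_succ, Finset.sum_sub_distrib] at *
    have hAe : extA A (i+1) j = A ⟨i+1, hin⟩ ⟨j, hj⟩ := extA_eq A ⟨i+1, hin⟩ ⟨j, hj⟩
    rw [hAe]
    linarith [key]
  rcases eq_or_lt_of_le hrn with hrn' | hrn'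
  · rw [lam_hi A _ (by omega)]
    exact lam_nonneg h0 _ _
  · rw [lam_hi A _ (by omega), lam_hi A _ (by omega)]

section
variable {A : Matrix (Fin n) (Fin m) ℤ}
variable (h0 : ∀ i j, 0 ≤ A i j) (hrow : ∀ i, ∑ j, A i j = m)
variable (hcol : ∀ j, ∑ i, A i j = n)
variable (hiv : ∀ i i' : Fin n, (i' : ℕ) = (i : ℕ) + 1 →
      ∀ l : Fin m,
        A i' l ≤ ∑ j ∈ Finset.univ.filter (fun j : Fin m => (j : ℕ) < (l : ℕ)),
          (A i j - A i' j))

include h0 hrow hiv in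
lemma lam_triangle : ∀ j, j ≤ m → ∀ r : ℤ, (j : ℤ) < r → lam A j r = 0 := by
  intro j
  induction j with
  | zero =>
    intro _ r hr
    rcases le_or_gt r n with h | h
    · rw [lam_mid' A 0 (by omega) h]; simp
    · exact lam_hi A 0 h
  | succ j ih =>
    intro hjm r hr
    have h1 : lam A (j+1) r ≤ lam A j (r-1) := by
      have := interlace h0 hrow hiv (show j < m by omega) (r-1)
      simpa using this
    have h2 : lam A j (r-1) = 0 := ih (by omega) (r-1) (by omega)
    have h3 : 0 ≤ lam A (j+1) r := lam_nonneg h0 _ _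
    omega

include h0 hrow hiv in
lemma lam_full (hnm : n ≤ m) :
    ∀ d j, j + d = m → ∀ r : ℤ, 1 ≤ r → r ≤ (j : ℤ) - (m - n : ℕ) → lam A j r = m := by
  intro d
  induction d with
  | zero =>
    intro j hj r h1 h2
    have hjm : j = m := by omega
    have hrn : r ≤ n := by omega
    rw [lam_mid' A j h1 hrn]
    exact sum_ext_row hrow _ (by omega) (by omega)
  | succ d ih =>
    intro j hj r h1 h2
    have h3 : lam A (j+1) (r+1) = m := ih (j+1) (by omega) (r+1) (by omega) (by push_cast; omega)
    have h4 := interlace h0 hrow hiv (show j < m by omega) r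
    have h5 := lam_le h0 hrow j r
    omega

end

/-- cumulative eigensteps: Λ(j,a) = Σ_{t ≤ a} λ(j,t) (terms with t ≤ 0 count `m` each). -/
def Lam (A : Matrix (Fin n) (Fin m) ℤ) (j : ℕ) (a : ℤ) : ℤ :=
  (m : ℤ) * min a 0 + ∑ t ∈ Finset.range a.toNat, lam A j ((t : ℤ) + 1)

lemma Lam_sub (A : Matrix (Fin n) (Fin m) ℤ) (j : ℕ) (a : ℤ) :
    Lam A j a - Lam A j (a - 1) = lam A j a := by
  rcases le_or_gt a 0 with h | h
  · have h1 : min a 0 = a := by omega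
    have h2 : min (a-1) 0 = a - 1 := by omega
    have h3 : a.toNat = 0 := by omega
    have h4 : (a-1).toNat = 0 := by omega
    rw [Lam, Lam, h1, h2, h3, h4, lam_nonpos A j h]
    ring
  · have h1 : min a 0 = 0 := by omega
    have h2 : min (a-1) 0 = 0 := by omega
    have h3 : a.toNat = (a-1).toNat + 1 := by omega
    rw [Lam, Lam, h1, h2, h3, Finset.sum_range_succ]
    have h4 : ((a-1).toNat : ℤ) + 1 = a := by omega
    rw [h4]; ring

lemma sum_lam_shift (A : Matrix (Fin n) (Fin m) ℤ) (j : ℕ) (b : ℤ) :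
    ∀ r : ℕ, ∑ s ∈ Finset.range r, lam A j (b - (s : ℤ))
      = Lam A j b - Lam A j (b - (r : ℤ)) := by
  intro r
  induction r with
  | zero => simp
  | succ r ih =>
    rw [Finset.sum_range_succ, ih]
    have := Lam_sub A j (b - (r : ℤ))
    have hc : b - ((r : ℤ) + 1) = b - (r:ℤ) - 1 := by ring
    push_cast
    rw [hc]
    omega

section
variable {A : Matrix (Fin n) (Fin m) ℤ}
variable (h0 : ∀ i j, 0 ≤ A i j) (hrow : ∀ i, ∑ j, A i j = m)
variable (hcol : ∀ j, ∑ i, A i j = n)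
variable (hiv : ∀ i i' : Fin n, (i' : ℕ) = (i : ℕ) + 1 →
      ∀ l : Fin m,
        A i' l ≤ ∑ j ∈ Finset.univ.filter (fun j : Fin m => (j : ℕ) < (l : ℕ)),
          (A i j - A i' j))

include h0 hrow hiv in
lemma Lam_low (hnm : n ≤ m) {j : ℕ} (hj : j ≤ m) {a : ℤ}
    (ha : a ≤ (j : ℤ) - (m - n : ℕ)) : Lam A j a = m * a := by
  rcases le_or_gt a 0 with h | h
  · have h1 : min a 0 = a := by omega
    have h3 : a.toNat = 0 := by omega
    rw [Lam, h1, h3]; simp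
  · have h1 : min a 0 = 0 := by omega
    rw [Lam, h1]
    rw [Finset.sum_congr rfl (fun t ht => by
      have ht' := Finset.mem_range.1 ht
      exact lam_full h0 hrow hiv hnm (m - j) j (by omega) ((t:ℤ)+1) (by omega)
        (by push_cast; omega))]
    rw [Finset.sum_const, Finset.card_range]
    have h5 : (a.toNat : ℤ) = a := by omega
    rw [nsmul_eq_mul, h5]; ring

include h0 hrow hiv hcol in
lemma Lam_high {j : ℕ} (hj : j ≤ m) {a : ℤ} (ha : (j : ℤ) ≤ a) :
    Lam A j a = j * n := by
  have h1 : min a 0 = 0 := by omega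
  rw [Lam, h1]
  have key : (∑ t ∈ Finset.range a.toNat, lam A j ((t:ℤ)+1))
      = ∑ t ∈ Finset.range (min a.toNat n), lam A j ((t:ℤ)+1) := by
    rw [← Finset.sum_subset (Finset.range_subset_range.2 (min_le_left a.toNat n))]
    intro t ht hts
    simp only [Finset.mem_range, lt_min_iff, not_and_or, not_lt] at ht hts
    rcases hts with h' | h'
    · omega
    · rcases le_or_gt ((t:ℤ)+1) n with hh | hh
      · exact lam_triangle h0 hrow hiv j hj ((t:ℤ)+1) (by omega)
      · exact lam_hi A j hh
  rw [key]
  have core : (∑ t ∈ Finset.range n, lam A j ((t:ℤ)+1)) = (j:ℤ) * n := by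
    rw [Finset.sum_congr rfl (fun t ht => lam_mid A j (Finset.mem_range.1 ht))]
    rw [Finset.sum_comm]
    rw [Finset.sum_congr rfl (fun c hc => sum_ext_col hcol c
      (by have := Finset.mem_range.1 hc; omega))]
    rw [Finset.sum_const, Finset.card_range, nsmul_eq_mul]
  have pad : (∑ t ∈ Finset.range (min a.toNat n), lam A j ((t:ℤ)+1))
      = ∑ t ∈ Finset.range n, lam A j ((t:ℤ)+1) := by
    apply Finset.sum_subset (Finset.range_subset_range.2 (min_le_right _ _))
    intro t ht hts
    simp only [Finset.mem_range, lt_min_iff, not_and_or, not_lt] at ht hts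
    have hta : a.toNat ≤ t := by omega
    exact lam_triangle h0 hrow hiv j hj _ (by omega)
  rw [pad, core]; ring

include hcol in
lemma Lam_col_diff {c : ℕ} (hc : c < m) (b : ℤ) :
    Lam A (c+1) b - Lam A c b = ∑ t ∈ Finset.range (min b.toNat n), extA A t c := by
  have h2 : Lam A (c+1) b - Lam A c b
      = ∑ t ∈ Finset.range b.toNat, (lam A (c+1) ((t:ℤ)+1) - lam A c ((t:ℤ)+1)) := by
    rw [Lam, Lam, Finset.sum_sub_distrib]; ring
  have h1 : ∀ t ∈ Finset.range b.toNat,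
      lam A (c+1) ((t:ℤ)+1) - lam A c ((t:ℤ)+1)
        = if t < n then extA A t c else 0 := by
    intro t _
    by_cases htn : t < n
    · rw [lam_mid A (c+1) htn, lam_mid A c htn, Finset.sum_range_succ]
      simp [htn]
    · rw [lam_hi A _ (show (n:ℤ) < (t:ℤ)+1 by omega),
        lam_hi A _ (show (n:ℤ) < (t:ℤ)+1 by omega)]
      simp [htn]
  rw [h2, Finset.sum_congr rfl h1]
  rw [← Finset.sum_subset (Finset.range_subset_range.2 (min_le_left b.toNat n))
    (by intro t ht hts
        simp only [Finset.mem_range, lt_min_iff, not_and_or, not_lt] at ht hts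
        have hnn : n ≤ t := by omega
        simp [Nat.not_lt.2 hnn])]
  exact Finset.sum_congr rfl (fun t ht => by
    simp only [Finset.mem_range, lt_min_iff] at ht
    simp [ht.2])

include hcol in
lemma extV {c c' : Fin m} (hc' : (c' : ℕ) = (c : ℕ) + 1)
    (hcc' : ∀ r : Fin n,
      A r c' ≤ ∑ i ∈ Finset.univ.filter (fun i : Fin n => (i : ℕ) < (r : ℕ)),
        (A i c - A i c'))
    (a : ℤ) :
    Lam A ((c:ℕ)+2) (a+1) - Lam A ((c:ℕ)+1) (a+1)
      ≤ Lam A ((c:ℕ)+1) a - Lam A (c:ℕ) a := by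
  have hc1m : (c:ℕ) + 1 < m := hc' ▸ c'.isLt
  have e1 : Lam A ((c:ℕ)+2) (a+1) - Lam A ((c:ℕ)+1) (a+1)
      = ∑ t ∈ Finset.range (min (a+1).toNat n), extA A t ((c:ℕ)+1) :=
    Lam_col_diff hcol hc1m (a+1)
  have e2 : Lam A ((c:ℕ)+1) a - Lam A (c:ℕ) a
      = ∑ t ∈ Finset.range (min a.toNat n), extA A t (c:ℕ) :=
    Lam_col_diff hcol c.isLt a
  rw [e1, e2]
  rcases lt_or_ge a 0 with ha | ha
  · have h3 : min (a+1).toNat n = 0 := by omega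
    have h2 : a.toNat = 0 := by omega
    simp [h2, h3]
  rcases le_or_gt n a.toNat with hna | hna
  · have h1 : min (a+1).toNat n = n := by omega
    have h2 : min a.toNat n = n := by omega
    rw [h1, h2, sum_ext_col hcol _ hc1m, sum_ext_col hcol _ c.isLt]
  · have h1 : min (a+1).toNat n = a.toNat + 1 := by omega
    have h2 : min a.toNat n = a.toNat := by omega
    rw [h1, h2]
    have key := hcc' ⟨a.toNat, hna⟩
    rw [sum_filter_lt a.toNat (le_of_lt hna) _
      (fun t => extA A t (c:ℕ) - extA A t ((c:ℕ)+1))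
      (fun i => by
        show extA A (i:ℕ) (c:ℕ) - extA A (i:ℕ) ((c:ℕ)+1) = _
        rw [show ((c:ℕ)+1) = (c' : ℕ) from hc'.symm]
        rw [extA_eq A i c, extA_eq A i c'])] at key
    rw [Finset.sum_range_succ, Finset.sum_sub_distrib] at *
    have hAe : extA A a.toNat ((c:ℕ)+1) = A ⟨a.toNat, hna⟩ c' := by
      rw [show ((c:ℕ)+1) = (c' : ℕ) from hc'.symm]
      exact extA_eq A ⟨a.toNat, hna⟩ c'
    rw [hAe]
    linarith [key]

end

end CfgDual


namespace CfgDual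

variable {n m : ℕ}

/-- The Naimark complement of a configuration matrix. -/
def Phi (n' : ℕ) (A : Matrix (Fin n) (Fin m) ℤ) : Matrix (Fin n') (Fin m) ℤ :=
  fun s j => lam A j ((j : ℤ) - (s : ℤ)) - lam A (j + 1) ((j : ℤ) + 1 - (s : ℤ))

theorem Phi_isConfig {K : ℕ} {L : Fin K → ℕ} {n' : ℕ} {A : Matrix (Fin n) (Fin m) ℤ}
    (hn' : n' + n = m) (hc : IsConfig n K m L A) :
    IsConfig n' K m L (Phi n' A) := by
  obtain ⟨hM, h0, hrow, hcol, hiv, hv⟩ := hc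
  have hnm : n ≤ m := by omega
  have hmn' : ((m - n : ℕ) : ℤ) = (n' : ℤ) := by omega
  refine ⟨hM, ?_, ?_, ?_, ?_, ?_⟩
  · -- nonneg
    intro s j
    have h := interlace h0 hrow hiv j.isLt ((j : ℤ) - (s : ℤ))
    have e : (j : ℤ) - (s:ℤ) + 1 = (j : ℤ) + 1 - (s:ℤ) := by ring
    rw [e] at h
    simpa [Phi] using sub_nonneg.2 h
  · -- row sums
    intro s
    have h1 : ∑ j : Fin m, Phi n' A s j
        = ∑ t ∈ Finset.range m, ((fun u : ℕ => lam A u ((u:ℤ) - (s:ℤ))) t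
            - (fun u : ℕ => lam A u ((u:ℤ) - (s:ℤ))) (t+1)) := by
      rw [← Fin.sum_univ_eq_sum_range]
      apply Finset.sum_congr rfl
      intro j _
      show Phi n' A s j = lam A (j:ℕ) (((j:ℕ):ℤ) - (s:ℤ))
        - lam A ((j:ℕ)+1) ((((j:ℕ)+1 : ℕ):ℤ) - (s:ℤ))
      simp only [Phi]
      push_cast
      ring_nf
    rw [h1, Finset.sum_range_sub' (fun u : ℕ => lam A u ((u:ℤ) - (s:ℤ))) m]
    show lam A 0 (((0:ℕ):ℤ) - (s:ℤ)) - lam A m ((m:ℤ) - (s:ℤ)) = (m:ℤ)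
    have hs : (s : ℕ) < n' := s.isLt
    rw [lam_nonpos A 0 (by simp), lam_hi A m (by omega)]
    ring
  · -- column sums
    intro j
    have hQ : ∑ s ∈ Finset.range n', (lam A (j:ℕ) ((j:ℤ) - (s:ℤ))
          - lam A ((j:ℕ)+1) ((j:ℤ) + 1 - (s:ℤ)))
        = (Lam A j (j:ℤ) - Lam A j ((j:ℤ) - (n':ℤ)))
          - (Lam A ((j:ℕ)+1) ((j:ℤ)+1) - Lam A ((j:ℕ)+1) ((j:ℤ)+1 - (n':ℤ))) := by
      rw [Finset.sum_sub_distrib, sum_lam_shift A j (j:ℤ) n',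
        sum_lam_shift A ((j:ℕ)+1) ((j:ℤ)+1) n']
    have e1 : Lam A j (j:ℤ) = (j:ℤ) * n := Lam_high h0 hrow hcol hiv (le_of_lt j.isLt) le_rfl
    have e2 : Lam A ((j:ℕ)+1) ((j:ℤ)+1) = ((j:ℤ)+1) * n := by
      have := Lam_high h0 hrow hcol hiv (show (j:ℕ)+1 ≤ m from j.isLt)
        (show (((j:ℕ)+1 : ℕ) : ℤ) ≤ (j:ℤ)+1 by push_cast; omega)
      push_cast at this ⊢; linarith [this]
    have e3 : Lam A j ((j:ℤ) - (n':ℤ)) = m * ((j:ℤ) - (n':ℤ)) :=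
      Lam_low h0 hrow hiv hnm (le_of_lt j.isLt) (by omega)
    have e4 : Lam A ((j:ℕ)+1) ((j:ℤ)+1 - (n':ℤ)) = m * ((j:ℤ)+1 - (n':ℤ)) :=
      Lam_low h0 hrow hiv hnm (show (j:ℕ)+1 ≤ m from j.isLt) (by push_cast; omega)
    have h1 : ∑ s : Fin n', Phi n' A s j
        = ∑ s ∈ Finset.range n', (lam A (j:ℕ) ((j:ℤ) - (s:ℤ))
            - lam A ((j:ℕ)+1) ((j:ℤ) + 1 - (s:ℤ))) := by
      rw [← Fin.sum_univ_eq_sum_range]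
      exact Finset.sum_congr rfl fun s _ => rfl
    rw [h1, hQ, e1, e2, e3, e4]
    have h3 : (m:ℤ) = (n':ℤ) + (n:ℤ) := by omega
    rw [h3]; ring
  · -- condition (iv)
    intro i i' hii' l
    have hRHS : ∑ j ∈ Finset.univ.filter (fun j : Fin m => (j:ℕ) < (l:ℕ)),
        (Phi n' A i j - Phi n' A i' j)
        = lam A (l:ℕ) ((l:ℤ) - (i':ℤ)) - lam A (l:ℕ) ((l:ℤ) - (i:ℤ)) := by
      have hconv := sum_filter_lt (mm := m) (l:ℕ) (le_of_lt l.isLt)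
        (fun j : Fin m => Phi n' A i j - Phi n' A i' j)
        (fun t => (fun u : ℕ => lam A u ((u:ℤ) - (i:ℤ)) - lam A u ((u:ℤ) - (i':ℤ))) t
          - (fun u : ℕ => lam A u ((u:ℤ) - (i:ℤ)) - lam A u ((u:ℤ) - (i':ℤ))) (t+1))
        (fun j => by
          show _ = Phi n' A i j - Phi n' A i' j
          simp only [Phi]
          push_cast
          ring)
      rw [hconv, Finset.sum_range_sub' (fun u : ℕ => lam A u ((u:ℤ) - (i:ℤ))
        - lam A u ((u:ℤ) - (i':ℤ))) (l:ℕ)]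
      show lam A 0 (((0:ℕ):ℤ) - (i:ℤ)) - lam A 0 (((0:ℕ):ℤ) - (i':ℤ))
          - (lam A (l:ℕ) ((l:ℤ) - (i:ℤ)) - lam A (l:ℕ) ((l:ℤ) - (i':ℤ))) = _
      rw [lam_nonpos A 0 (show ((0:ℕ):ℤ) - (i:ℤ) ≤ 0 by simp),
        lam_nonpos A 0 (show ((0:ℕ):ℤ) - (i':ℤ) ≤ 0 by simp)]
      ring
    rw [hRHS]
    have hc2 : (i' : ℤ) = (i : ℤ) + 1 := by exact_mod_cast hii'
    have hmono := lam_mono h0 (l:ℕ) ((l:ℤ) - (i:ℤ))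
    have e : (l:ℤ) + 1 - (i':ℤ) = (l:ℤ) - (i:ℤ) := by omega
    show lam A (l:ℕ) ((l:ℤ) - (i':ℤ)) - lam A ((l:ℕ)+1) ((l:ℤ) + 1 - (i':ℤ)) ≤ _
    rw [e]
    linarith
  · -- condition (v)
    intro k c c' hcc' hbs hbe r
    have hc1m : (c:ℕ) + 1 < m := hcc' ▸ c'.isLt
    have hQ : ∀ (x : ℕ) (xm : x < m) (rr : ℕ), ∑ s ∈ Finset.range rr,
          (lam A x ((x:ℤ) - (s:ℤ)) - lam A (x+1) ((x:ℤ) + 1 - (s:ℤ)))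
        = (Lam A x (x:ℤ) - Lam A x ((x:ℤ) - (rr:ℤ)))
          - (Lam A (x+1) ((x:ℤ)+1) - Lam A (x+1) ((x:ℤ)+1 - (rr:ℤ))) := by
      intro x _ rr
      rw [Finset.sum_sub_distrib, sum_lam_shift A x (x:ℤ) rr,
        sum_lam_shift A (x+1) ((x:ℤ)+1) rr]
    have hS1 : ∑ i ∈ Finset.univ.filter (fun i : Fin n' => (i:ℕ) < (r:ℕ)), Phi n' A i c
        = (Lam A (c:ℕ) ((c:ℕ):ℤ) - Lam A (c:ℕ) (((c:ℕ):ℤ) - ((r:ℕ):ℤ)))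
          - (Lam A ((c:ℕ)+1) (((c:ℕ):ℤ)+1) - Lam A ((c:ℕ)+1) (((c:ℕ):ℤ)+1 - ((r:ℕ):ℤ))) := by
      have hconv := sum_filter_lt (mm := n') (r:ℕ) (le_of_lt r.isLt)
        (fun i : Fin n' => Phi n' A i c)
        (fun s => lam A (c:ℕ) (((c:ℕ):ℤ) - (s:ℤ)) - lam A ((c:ℕ)+1) (((c:ℕ):ℤ) + 1 - (s:ℤ)))
        (fun s => rfl)
      rw [hconv, hQ (c:ℕ) c.isLt (r:ℕ)]
    have hS2' : ∑ i ∈ Finset.univ.filter (fun i : Fin n' => (i:ℕ) < (r:ℕ)), Phi n' A i c'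
        = (Lam A ((c:ℕ)+1) (((c:ℕ):ℤ)+1) - Lam A ((c:ℕ)+1) (((c:ℕ):ℤ)+1 - ((r:ℕ):ℤ)))
          - (Lam A ((c:ℕ)+1+1) (((c:ℕ):ℤ)+1+1)
            - Lam A ((c:ℕ)+1+1) (((c:ℕ):ℤ)+1+1 - ((r:ℕ):ℤ))) := by
      have hconv := sum_filter_lt (mm := n') (r:ℕ) (le_of_lt r.isLt)
        (fun i : Fin n' => Phi n' A i c')
        (fun s => lam A (c':ℕ) (((c':ℕ):ℤ) - (s:ℤ)) - lam A ((c':ℕ)+1) (((c':ℕ):ℤ) + 1 - (s:ℤ)))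
        (fun s => rfl)
      rw [hconv, hQ (c':ℕ) c'.isLt (r:ℕ), hcc']
      push_cast
      ring_nf
    -- express the left hand side via Lam
    have hBdef : Phi n' A r c'
        = lam A ((c:ℕ)+1) (((c:ℕ):ℤ)+1 - ((r:ℕ):ℤ))
          - lam A ((c:ℕ)+1+1) (((c:ℕ):ℤ)+1+1 - ((r:ℕ):ℤ)) := by
      show lam A (c':ℕ) (((c':ℕ):ℤ) - ((r:ℕ):ℤ))
          - lam A ((c':ℕ)+1) (((c':ℕ):ℤ)+1 - ((r:ℕ):ℤ)) = _
      rw [hcc']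
      push_cast
      ring_nf
    have l1 := Lam_sub A ((c:ℕ)+1) (((c:ℕ):ℤ)+1 - ((r:ℕ):ℤ))
    rw [show ((c:ℕ):ℤ)+1 - ((r:ℕ):ℤ) - 1 = ((c:ℕ):ℤ) - ((r:ℕ):ℤ) from by ring] at l1
    have l2 := Lam_sub A ((c:ℕ)+1+1) (((c:ℕ):ℤ)+1+1 - ((r:ℕ):ℤ))
    rw [show ((c:ℕ):ℤ)+1+1 - ((r:ℕ):ℤ) - 1 = ((c:ℕ):ℤ)+1 - ((r:ℕ):ℤ) from by ring] at l2
    have hx := extV hcol hcc' (hv k c c' hcc' hbs hbe) (((c:ℕ):ℤ) - ((r:ℕ):ℤ))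
    rw [show ((c:ℕ):ℤ) - ((r:ℕ):ℤ) + 1 = ((c:ℕ):ℤ)+1 - ((r:ℕ):ℤ) from by ring,
      show (c:ℕ)+2 = (c:ℕ)+1+1 from rfl] at hx
    have e_hi0 : Lam A (c:ℕ) ((c:ℕ):ℤ) = ((c:ℕ):ℤ) * (n:ℤ) :=
      Lam_high h0 hrow hcol hiv (le_of_lt c.isLt) le_rfl
    have e_hi1 : Lam A ((c:ℕ)+1) (((c:ℕ):ℤ)+1) = (((c:ℕ):ℤ)+1) * (n:ℤ) := by
      have := Lam_high h0 hrow hcol hiv (show (c:ℕ)+1 ≤ m by omega)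
        (show (((c:ℕ)+1 : ℕ):ℤ) ≤ ((c:ℕ):ℤ)+1 by push_cast; omega)
      push_cast at this ⊢
      linarith [this]
    have e_hi2 : Lam A ((c:ℕ)+1+1) (((c:ℕ):ℤ)+1+1) = (((c:ℕ):ℤ)+1+1) * (n:ℤ) := by
      have := Lam_high h0 hrow hcol hiv (show (c:ℕ)+1+1 ≤ m by omega)
        (show (((c:ℕ)+1+1 : ℕ):ℤ) ≤ ((c:ℕ):ℤ)+1+1 by push_cast; omega)
      push_cast at this ⊢
      linarith [this]
    rw [Finset.sum_sub_distrib, hS1, hS2', hBdef]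
    linarith [l1, l2, hx, e_hi0, e_hi1, e_hi2]

theorem lam_Phi {n' : ℕ} {A : Matrix (Fin n) (Fin m) ℤ} (hn' : n' + n = m)
    (h0 : ∀ i j, 0 ≤ A i j) (hrow : ∀ i, ∑ j, A i j = m)
    (hiv : ∀ i i' : Fin n, (i' : ℕ) = (i : ℕ) + 1 →
      ∀ l : Fin m,
        A i' l ≤ ∑ j ∈ Finset.univ.filter (fun j : Fin m => (j : ℕ) < (l : ℕ)),
          (A i j - A i' j))
    {j : ℕ} (hj : j ≤ m) (r : ℤ) :
    lam (Phi n' A) j r = (m : ℤ) - lam A j ((j : ℤ) + 1 - r) := by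
  have hnm : n ≤ m := by omega
  rcases le_or_gt r 0 with hr | hr
  · rw [lam_nonpos (Phi n' A) j hr,
      lam_triangle h0 hrow hiv j hj ((j:ℤ)+1-r) (by omega)]
    ring
  rcases lt_or_ge (n' : ℤ) r with hr2 | hr2
  · rw [lam_hi (Phi n' A) j hr2]
    rcases le_or_gt ((j:ℤ)+1-r) 0 with h3 | h3
    · rw [lam_nonpos A j h3]; ring
    · rw [lam_full h0 hrow hiv hnm (m-j) j (by omega) ((j:ℤ)+1-r) h3 (by omega)]
      ring
  · -- middle range
    set s : ℕ := r.toNat - 1 with hsdef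
    have hs : s < n' := by omega
    have hmid := lam_mid' (Phi n' A) j hr hr2
    have hsr : r.toNat - 1 = s := rfl
    rw [hmid, hsr]
    have hext : ∀ c ∈ Finset.range j, extA (Phi n' A) s c
        = (fun u : ℕ => lam A u ((u:ℤ) - (s:ℤ))) c
          - (fun u : ℕ => lam A u ((u:ℤ) - (s:ℤ))) (c+1) := by
      intro c hcj
      have hcm : c < m := lt_of_lt_of_le (Finset.mem_range.1 hcj) hj
      have h5 : extA (Phi n' A) s c = Phi n' A ⟨s, hs⟩ ⟨c, hcm⟩ :=
        extA_eq (Phi n' A) ⟨s, hs⟩ ⟨c, hcm⟩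
      rw [h5]
      show lam A c ((c:ℤ) - (s:ℤ)) - lam A (c+1) ((c:ℤ) + 1 - (s:ℤ)) = _
      push_cast
      ring_nf
    rw [Finset.sum_congr rfl hext,
      Finset.sum_range_sub' (fun u : ℕ => lam A u ((u:ℤ) - (s:ℤ))) j]
    show lam A 0 (((0:ℕ):ℤ) - (s:ℤ)) - lam A j ((j:ℤ) - (s:ℤ)) = _
    rw [lam_nonpos A 0 (by simp),
      show (j:ℤ) - (s:ℤ) = (j:ℤ) + 1 - r by omega]

theorem Phi_Phi {K : ℕ} {L : Fin K → ℕ} {n' : ℕ} {A : Matrix (Fin n) (Fin m) ℤ}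
    (hn' : n' + n = m) (hc : IsConfig n K m L A) :
    Phi n (Phi n' A) = A := by
  obtain ⟨hM, h0, hrow, hcol, hiv, hv⟩ := hc
  ext i j
  show lam (Phi n' A) (j:ℕ) ((j:ℤ) - (i:ℤ))
      - lam (Phi n' A) ((j:ℕ)+1) ((j:ℤ) + 1 - (i:ℤ)) = A i j
  rw [lam_Phi hn' h0 hrow hiv (le_of_lt j.isLt) ((j:ℤ) - (i:ℤ)),
    lam_Phi hn' h0 hrow hiv (show (j:ℕ)+1 ≤ m from j.isLt) ((j:ℤ) + 1 - (i:ℤ)),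
    show (j:ℤ) + 1 - ((j:ℤ) - (i:ℤ)) = ((i:ℕ):ℤ) + 1 by ring,
    show (((j:ℕ)+1 : ℕ):ℤ) + 1 - ((j:ℤ) + 1 - (i:ℤ)) = ((i:ℕ):ℤ) + 1 by push_cast; ring,
    lam_mid A ((j:ℕ)+1) i.isLt, lam_mid A (j:ℕ) i.isLt, Finset.sum_range_succ,
    extA_eq A i j]
  ring

end CfgDual

/-- Combinatorial Naimark duality: for `M = Σᵢ Lᵢ > N`, the number of configuration
matrices for `(L_1, …, L_K; N)` equals the number of configuration matrices for
`(L_1, …, L_K; M - N)`, i.e. the Littlewood–Richardson coefficients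
`c((N^{L_1}),…,(N^{L_K});(M^N))` and `c(((M-N)^{L_1}),…,((M-N)^{L_K});(M^{M-N}))`
are equal. -/
theorem config_naimark_duality (N K : ℕ) (hN : 0 < N)
    (L : Fin K → ℕ) (hL : Antitone L) (hpos : ∀ i, 0 < L i) (hLN : ∀ i, L i ≤ N)
    (M : ℕ) (hM : M = ∑ i, L i) (hMN : N < M) :
    Set.ncard {A : Matrix (Fin N) (Fin M) ℤ | IsConfig N K M L A} =
      Set.ncard {B : Matrix (Fin (M - N)) (Fin M) ℤ | IsConfig (M - N) K M L B} := by
  classical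
  set S := {A : Matrix (Fin N) (Fin M) ℤ | IsConfig N K M L A} with hS
  set T := {B : Matrix (Fin (M - N)) (Fin M) ℤ | IsConfig (M - N) K M L B} with hT
  have h1 : ∀ A ∈ S, CfgDual.Phi (M - N) A ∈ T := fun A hA => CfgDual.Phi_isConfig (by omega) hA
  have h2 : ∀ B ∈ T, CfgDual.Phi N B ∈ S := fun B hB =>
    CfgDual.Phi_isConfig (n := M - N) (n' := N) (m := M) (by omega) hB
  have h3 : ∀ A ∈ S, CfgDual.Phi N (CfgDual.Phi (M - N) A) = A := fun A hA =>
    CfgDual.Phi_Phi (n' := M - N) (by omega) hA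
  have h4 : ∀ B ∈ T, CfgDual.Phi (M - N) (CfgDual.Phi N B) = B := fun B hB =>
    CfgDual.Phi_Phi (n := M - N) (n' := N) (m := M) (by omega) hB
  have himg : T = (CfgDual.Phi (M - N)) '' S := by
    ext B
    constructor
    · intro hB; exact ⟨CfgDual.Phi N B, h2 B hB, h4 B hB⟩
    · rintro ⟨A, hA, rfl⟩; exact h1 A hA
  have hinj : Set.InjOn (CfgDual.Phi (M - N)) S := by
    intro A hA A' hA' h
    rw [← h3 A hA, ← h3 A' hA', h]
  rw [himg, Set.ncard_image_of_injOn hinj]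
end
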